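/- arXiv:1703.04767 — 5 statements merged into one kernel-verified Lean document; each statement's English description precedes it below -/
import Mathlib

section
/- Let d and k be integers with 1 ≤ k ≤ d−1. There is a constant C = C(d,k) > 0 such that the following holds. Let Λ be a d-dimensional lattice in ℝ^d and let K ∈ K^d, and set λ_i := λ_i(Λ,K) for i = 1,…,d. If λ_d ≤ 1, then the set Λ ∩ K can be covered by at most C·(λ_{k+1}·λ_{k+2}·⋯·λ_d)^{−1} k-dimensional affine subspaces of ℝ^d. -/
open scoped BigOperators Pointwise
open Metric

noncomputable section

abbrev Euc (d : ℕ) := EuclideanSpace ℝ (Fin d)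

def IsLattice {d : ℕ} (Λ : Set (Euc d)) : Prop :=
  ∃ b : Fin d → Euc d, LinearIndependent ℝ b ∧
    Λ = {x : Euc d | ∃ c : Fin d → ℤ, x = ∑ i, (c i : ℝ) • b i}

def IsSymmConvexBody {d : ℕ} (K : Set (Euc d)) : Prop :=
  IsCompact K ∧ Convex ℝ K ∧ (interior K).Nonempty ∧ K = -K

def succMin {d : ℕ} (Λ K : Set (Euc d)) (i : ℕ) : ℝ :=
  sInf {r : ℝ | 0 < r ∧ ∃ v : Fin i → Euc d,
    LinearIndependent ℝ v ∧ ∀ j, v j ∈ Λ ∧ v j ∈ r • K}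

def unitBall (d : ℕ) : Set (Euc d) := Metric.closedBall 0 1

def intPoints (d : ℕ) : Set (Euc d) := {x | ∀ i, ∃ m : ℤ, x i = (m : ℝ)}

def dualLattice {d : ℕ} (Λ : Set (Euc d)) : Set (Euc d) :=
  {y | ∀ x ∈ Λ, ∃ m : ℤ, (inner ℝ x y : ℝ) = (m : ℝ)}

def IsPrimitive {d : ℕ} (L : Set (Euc d)) (z : Euc d) : Prop :=
  z ∈ L ∧ z ≠ 0 ∧ ∀ t : ℝ, t • z ∈ L → ∃ m : ℤ, t = (m : ℝ)

def IsHyperplane {d : ℕ} (A : AffineSubspace ℝ (Euc d)) : Prop :=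
  (A : Set (Euc d)).Nonempty ∧ Module.finrank ℝ A.direction = d - 1

def inc {d : ℕ} (P : Finset (Euc d)) (H : Finset (AffineSubspace ℝ (Euc d))) : ℕ :=
  Set.ncard {ph : Euc d × AffineSubspace ℝ (Euc d) | ph.1 ∈ P ∧ ph.2 ∈ H ∧ ph.1 ∈ ph.2}

def HasKrr {d : ℕ} (P : Finset (Euc d)) (H : Finset (AffineSubspace ℝ (Euc d))) (r₁ r₂ : ℕ) : Prop :=
  ∃ (P' : Finset (Euc d)) (H' : Finset (AffineSubspace ℝ (Euc d))),
    P' ⊆ P ∧ H' ⊆ H ∧ P'.card = r₁ ∧ H'.card = r₂ ∧ ∀ p ∈ P', ∀ h ∈ H', p ∈ h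

set_option maxHeartbeats 1000000

section MyAux
variable {d : ℕ}

lemma my_smul_subset {Q : Set (Euc d)} (hQ : Convex ℝ Q) (h0 : (0:Euc d) ∈ Q)
    {a b : ℝ} (ha : 0 ≤ a) (hab : a ≤ b) : a • Q ⊆ b • Q := by
  rcases eq_or_lt_of_le (ha.trans hab) with hb | hb
  · have ha0 : a = 0 := le_antisymm (hab.trans hb.symm.le) ha
    rw [ha0, ← hb]
  · rintro z ⟨q, hq, rfl⟩
    refine ⟨(a/b) • q, ?_, ?_⟩
    · exact hQ.smul_mem_of_zero_mem h0 hq ⟨by positivity, div_le_one_of_le₀ hab hb.le⟩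
    · show b • ((a/b) • q) = a • q
      rw [smul_smul, mul_comm, div_mul_cancel₀ a hb.ne']

lemma my_mem_abs_smul {Q : Set (Euc d)} (hQs : Q = -Q) {c : ℝ} {q : Euc d} (hq : q ∈ Q) :
    c • q ∈ |c| • Q := by
  rcases le_or_gt 0 c with h | h
  · rw [abs_of_nonneg h]; exact Set.smul_mem_smul_set hq
  · rw [abs_of_neg h]
    have hnq : -q ∈ Q := by rw [hQs]; exact Set.neg_mem_neg.mpr hq
    have he : (-c) • (-q) = c • q := by rw [neg_smul, smul_neg, neg_neg]
    exact he ▸ Set.smul_mem_smul_set hnq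

lemma my_add_mem_smul {Q : Set (Euc d)} (hQ : Convex ℝ Q) {a b : ℝ} (ha : 0 ≤ a) (hb : 0 ≤ b)
    {u v : Euc d} (hu : u ∈ a • Q) (hv : v ∈ b • Q) : u + v ∈ (a+b) • Q := by
  rw [hQ.add_smul ha hb]; exact Set.add_mem_add hu hv

lemma my_exists_submodule (V : Submodule ℝ (Euc d)) {k : ℕ} (hk : k ≤ Module.finrank ℝ V) :
    ∃ T : Submodule ℝ (Euc d), T ≤ V ∧ Module.finrank ℝ T = k := by
  classical
  have B := Module.finBasis ℝ V
  set g : Fin k → Euc d := fun i => (B (Fin.castLE hk i) : Euc d) with hg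
  have hgi : LinearIndependent ℝ g := by
    have h1 : LinearIndependent ℝ (fun i : Fin k => B (Fin.castLE hk i)) :=
      B.linearIndependent.comp _ (Fin.castLE_injective hk)
    exact h1.map' V.subtype V.ker_subtype
  refine ⟨Submodule.span ℝ (Set.range g), ?_, ?_⟩
  · rw [Submodule.span_le]; rintro _ ⟨i, rfl⟩; exact (B _).2
  · rw [finrank_span_eq_card hgi, Fintype.card_fin]



lemma my_trivial (m k : ℕ) (L : AddSubgroup (Euc d)) (V : Submodule ℝ (Euc d))
    (hkV : k ≤ Module.finrank ℝ V) (Q : Set (Euc d)) (ρ : ℕ → ℝ)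
    (hρb : ∀ j, 1 ≤ j → j ≤ m → 0 < ρ j ∧ ρ j ≤ 2)
    (hdeg : (L : Set (Euc d)) ∩ Q ⊆ {0}) :
    ∃ (T : Submodule ℝ (Euc d)) (F : Set (Euc d)),
      T ≤ V ∧ Module.finrank ℝ T = k ∧ F.Finite ∧
      (∀ x ∈ (L : Set (Euc d)) ∩ Q, ∃ f ∈ F, x - f ∈ T) ∧
      (F.ncard : ℝ) ≤ ∏ j ∈ Finset.Icc (k+1) m, (6 * 7 ^ m / ρ j) := by
  obtain ⟨T, hTV, hTrk⟩ := my_exists_submodule V hkV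
  refine ⟨T, {0}, hTV, hTrk, Set.finite_singleton 0, ?_, ?_⟩
  · intro x hx
    have hx0 : x = 0 := hdeg hx
    exact ⟨0, rfl, by rw [hx0, sub_zero]; exact T.zero_mem⟩
  · rw [Set.ncard_singleton]
    have hfac : ∀ j ∈ Finset.Icc (k+1) m, (1:ℝ) ≤ 6 * 7 ^ m / ρ j := by
      intro j hj
      obtain ⟨h1, h2⟩ := Finset.mem_Icc.mp hj
      obtain ⟨hp, hle⟩ := hρb j (by omega) h2
      rw [le_div_iff₀ hp]
      have h7 : (1:ℝ) ≤ 7 ^ m := one_le_pow₀ (by norm_num)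
      nlinarith
    calc ((1:ℕ):ℝ) = ∏ _j ∈ Finset.Icc (k+1) m, (1:ℝ) := by rw [Finset.prod_const_one]; norm_num
      _ ≤ _ := Finset.prod_le_prod (fun _ _ => zero_le_one) hfac

lemma my_lemmaC (d : ℕ) : ∀ m : ℕ, ∀ k : ℕ,
    ∀ (L : AddSubgroup (Euc d)) (V : Submodule ℝ (Euc d)),
    ((L : Set (Euc d)) ⊆ (V : Set (Euc d))) →
    Module.finrank ℝ V ≤ m → k ≤ Module.finrank ℝ V →
    ∀ Q : Set (Euc d), Convex ℝ Q → Q = -Q → (0 : Euc d) ∈ Q →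
    ∀ ρ : ℕ → ℝ,
    (∀ j, 1 ≤ j → j ≤ m → 0 < ρ j ∧ ρ j ≤ 2) →
    (∀ j r, 1 ≤ j → j ≤ m → 0 < r → ∀ x : Fin j → Euc d, LinearIndependent ℝ x →
      (∀ i, x i ∈ L ∧ x i ∈ r • Q) → ρ j ≤ r) →
    ∃ (T : Submodule ℝ (Euc d)) (F : Set (Euc d)),
      T ≤ V ∧ Module.finrank ℝ T = k ∧ F.Finite ∧
      (∀ x ∈ (L : Set (Euc d)) ∩ Q, ∃ f ∈ F, x - f ∈ T) ∧
      (F.ncard : ℝ) ≤ ∏ j ∈ Finset.Icc (k+1) m, (6 * 7 ^ m / ρ j) := by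
  intro m
  induction m with
  | zero =>
    intro k L V hLV hVm hkV Q hQc hQs hQ0 ρ hρb hρ
    have hVbot : V = ⊥ := Submodule.finrank_eq_zero.mp (by omega)
    have hdeg : (L : Set (Euc d)) ∩ Q ⊆ {0} := by
      intro x hx
      have hxV := hLV hx.1
      rw [hVbot] at hxV
      simpa using hxV
    exact my_trivial 0 k L V hkV Q ρ hρb hdeg
  | succ m IH =>
    intro k L V hLV hVm hkV Q hQc hQs hQ0 ρ hρb hρ
    by_cases hdeg : (L : Set (Euc d)) ∩ Q ⊆ {0}
    · exact my_trivial (m+1) k L V hkV Q ρ hρb hdeg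
    -- nondegenerate case
    obtain ⟨x₀, hx₀, hx₀0⟩ := Set.not_subset.mp hdeg
    have hx₀ne : x₀ ≠ 0 := by simpa using hx₀0
    have hQneg : ∀ z ∈ Q, -z ∈ Q := fun z hz => by rw [hQs]; exact Set.neg_mem_neg.mpr hz
    set S₀ : Set ℝ := {r : ℝ | 0 < r ∧ ∃ x : Euc d, x ∈ L ∧ x ≠ 0 ∧ x ∈ r • Q} with hS₀
    have hS₀ne : S₀.Nonempty := ⟨1, one_pos, x₀, hx₀.1, hx₀ne, by rw [one_smul]; exact hx₀.2⟩
    have hS₀bdd : BddBelow S₀ := ⟨0, fun r hr => hr.1.le⟩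
    have hρ1 := hρb 1 le_rfl (by omega)
    have hS₀lb : ∀ r ∈ S₀, ρ 1 ≤ r := by
      rintro r ⟨hr, x, hxL, hxne, hxQ⟩
      exact hρ 1 r le_rfl (by omega) hr (fun _ => x)
        (linearIndependent_unique_iff.mpr hxne) (fun _ => ⟨hxL, hxQ⟩)
    set s := sInf S₀ with hs
    have hρ1s : ρ 1 ≤ s := le_csInf hS₀ne hS₀lb
    have hspos : 0 < s := lt_of_lt_of_le hρ1.1 hρ1s
    have hsle : ∀ r, 0 < r → (∃ x : Euc d, x ∈ L ∧ x ≠ 0 ∧ x ∈ r • Q) → s ≤ r :=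
      fun r hr hex => csInf_le hS₀bdd ⟨hr, hex⟩
    obtain ⟨ra, hraS, hralt⟩ := (csInf_lt_iff hS₀bdd hS₀ne).mp (by rw [← hs]; linarith : sInf S₀ < (3/2)*s)
    obtain ⟨hra_pos, w, hwL, hwne, hwQ⟩ := hraS
    -- projection
    set U : Submodule ℝ (Euc d) := (ℝ ∙ w)ᗮ with hU
    set π : Euc d →L[ℝ] Euc d := U.subtypeL.comp (U.orthogonalProjectionOnto) with hπdef
    have hπmem : ∀ x : Euc d, π x ∈ U := fun x => (U.orthogonalProjectionOnto x).2
    have hπsub : ∀ x : Euc d, x - π x ∈ (ℝ ∙ w : Submodule ℝ (Euc d)) := by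
      intro x
      have h1 : x - π x ∈ Uᗮ := Submodule.sub_starProjection_mem_orthogonal (K := U) x
      have h2 : Uᗮ = (ℝ ∙ w : Submodule ℝ (Euc d)) := by
        rw [hU]; exact Submodule.orthogonal_orthogonal _
      rwa [h2] at h1
    have hπw : π w = 0 := by
      have h1 : π w ∈ (ℝ ∙ w : Submodule ℝ (Euc d)) := by
        have h2 := hπsub w
        have h3 : π w = w - (w - π w) := by abel
        rw [h3]
        exact Submodule.sub_mem _ (Submodule.mem_span_singleton_self w) h2
      have h4 : (inner ℝ (π w) (π w) : ℝ) = 0 :=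
        (Submodule.mem_orthogonal _ (π w)).mp (hπmem w) (π w) h1
      exact inner_self_eq_zero.mp h4
    have hker : ∀ z : Euc d, π z = 0 → z ∈ (ℝ ∙ w : Submodule ℝ (Euc d)) := by
      intro z hz
      have h1 := hπsub z
      rwa [hz, sub_zero] at h1
    -- primitivity
    have hprim : ∀ t : ℝ, t • w ∈ L → ∃ n : ℤ, t = (n : ℝ) := by
      intro t ht
      by_contra hno
      push_neg at hno
      set τ := t - (round t : ℝ) with hτ
      have hτne : τ ≠ 0 := sub_ne_zero.mpr (hno (round t))
      have hτle : |τ| ≤ 1/2 := abs_sub_round t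
      have hzL : τ • w ∈ L := by
        have he : τ • w = t • w - (round t : ℤ) • w := by
          rw [hτ, sub_smul, ← Int.cast_smul_eq_zsmul ℝ]
        rw [he]
        exact sub_mem ht (AddSubgroup.zsmul_mem L hwL _)
      have hzne : τ • w ≠ 0 := smul_ne_zero hτne hwne
      have hzQ : τ • w ∈ (|τ| * ra) • Q := by
        obtain ⟨q, hq, hqe0⟩ := hwQ
        have hqe : ra • q = w := hqe0
        have he : τ • w = (τ * ra) • q := by rw [← hqe, smul_smul]
        rw [he]
        have h5 := my_mem_abs_smul hQs hq (c := τ * ra)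
        rwa [abs_mul, abs_of_pos hra_pos] at h5
      have h5 : s ≤ |τ| * ra := hsle _ (by positivity) ⟨τ • w, hzL, hzne, hzQ⟩
      have h6 : |τ| * ra ≤ (1/2) * ra := by
        apply mul_le_mul_of_nonneg_right hτle hra_pos.le
      linarith
    -- projected data
    set L' : AddSubgroup (Euc d) := L.map π.toLinearMap.toAddMonoidHom with hL'
    set V' : Submodule ℝ (Euc d) := V ⊓ U with hV'
    set Q' : Set (Euc d) := (⇑π) '' Q with hQ'
    have hwV : w ∈ V := hLV hwL
    have hwU : w ∉ U := by
      intro h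
      have h1 : (inner ℝ w w : ℝ) = 0 :=
        (Submodule.mem_orthogonal _ w).mp h w (Submodule.mem_span_singleton_self w)
      exact hwne (inner_self_eq_zero.mp h1)
    have hspanV : (ℝ ∙ w : Submodule ℝ (Euc d)) ≤ V := by
      rw [Submodule.span_singleton_le_iff_mem]; exact hwV
    have hπV : ∀ x, x ∈ V → π x ∈ V := by
      intro x hx
      have h1 : π x = x - (x - π x) := by abel
      rw [h1]
      exact Submodule.sub_mem V hx (hspanV (hπsub x))
    have hL'mem : ∀ y : Euc d, y ∈ L' ↔ ∃ x, x ∈ L ∧ π x = y := by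
      intro y
      constructor
      · intro h; obtain ⟨x, hx, he⟩ := AddSubgroup.mem_map.mp h; exact ⟨x, hx, he⟩
      · rintro ⟨x, hx, he⟩; exact AddSubgroup.mem_map.mpr ⟨x, hx, he⟩
    have hL'V' : (L' : Set (Euc d)) ⊆ (V' : Set (Euc d)) := by
      rintro y hy
      obtain ⟨x, hxL, rfl⟩ := (hL'mem y).mp hy
      exact Submodule.mem_inf.mpr ⟨hπV x (hLV hxL), hπmem x⟩
    have hV'lt : V' < V := by
      refine lt_of_le_of_ne inf_le_left ?_
      intro h
      rw [← h] at hwV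
      exact hwU (Submodule.mem_inf.mp hwV).2
    have hV'm : Module.finrank ℝ V' ≤ m := by
      have h1 := Submodule.finrank_lt_finrank_of_lt hV'lt
      omega
    have hUrk : Module.finrank ℝ U = d - 1 := by
      have h1 : Module.finrank ℝ U + Module.finrank ℝ Uᗮ = d := by
        have h2 := Submodule.finrank_add_finrank_orthogonal U
        rwa [finrank_euclideanSpace_fin] at h2
      have h2 : Uᗮ = (ℝ ∙ w : Submodule ℝ (Euc d)) := by
        rw [hU]; exact Submodule.orthogonal_orthogonal _
      have h3 : Module.finrank ℝ (ℝ ∙ w : Submodule ℝ (Euc d)) = 1 := finrank_span_singleton hwne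
      rw [h2, h3] at h1
      omega
    have hV'big : Module.finrank ℝ V - 1 ≤ Module.finrank ℝ V' := by
      have h4 := Submodule.finrank_sup_add_finrank_inf_eq V U
      have h5 : Module.finrank ℝ ↥(V ⊔ U) ≤ d := by
        have h6 := Submodule.finrank_le (V ⊔ U)
        rwa [finrank_euclideanSpace_fin] at h6
      have h7 : Module.finrank ℝ V ≤ d := by
        have h8 := Submodule.finrank_le V
        rwa [finrank_euclideanSpace_fin] at h8
      rw [hV']
      omega
    have hQ'c : Convex ℝ Q' := hQc.linear_image π.toLinearMap
    have hQ's : Q' = -Q' := by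
      ext z
      simp only [hQ', Set.mem_neg, Set.mem_image]
      constructor
      · rintro ⟨q, hq, rfl⟩
        exact ⟨-q, hQneg q hq, by rw [map_neg]⟩
      · rintro ⟨q, hq, hqe⟩
        exact ⟨-q, hQneg q hq, by rw [map_neg, hqe, neg_neg]⟩
    have hQ'0 : (0 : Euc d) ∈ Q' := ⟨0, hQ0, map_zero _⟩
    set ρ' : ℕ → ℝ := fun j => ρ (j+1) / 7 with hρ'
    have hρ'b : ∀ j, 1 ≤ j → j ≤ m → 0 < ρ' j ∧ ρ' j ≤ 2 := by
      intro j h1 h2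
      obtain ⟨hp, hl⟩ := hρb (j+1) (by omega) (by omega)
      exact ⟨by rw [hρ']; positivity, by rw [hρ']; simp only []; linarith⟩
    -- small-coefficient multiples of w
    have hsmulw : ∀ c : ℝ, |c| ≤ 1/2 → c • w ∈ (ra/2) • Q := by
      intro c hc
      obtain ⟨q, hq, hqe0⟩ := hwQ
      have hqe : ra • q = w := hqe0
      have h7 : c • w = (c * ra) • q := by rw [← hqe, smul_smul]
      rw [h7]
      refine my_smul_subset hQc hQ0 (abs_nonneg _) ?_ (my_mem_abs_smul hQs hq)
      rw [abs_mul, abs_of_pos hra_pos]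
      nlinarith
    have hρ'hyp : ∀ j r, 1 ≤ j → j ≤ m → 0 < r → ∀ y : Fin j → Euc d, LinearIndependent ℝ y →
        (∀ i, y i ∈ L' ∧ y i ∈ r • Q') → ρ' j ≤ r := by
      intro j r h1 h2 hr y hyind hy
      have hlift : ∀ i : Fin j, ∃ x : Euc d, x ∈ L ∧ π x = y i ∧ x ∈ (r + ra/2) • Q := by
        intro i
        obtain ⟨hyL, hyQ⟩ := hy i
        obtain ⟨x, hxL, hxe⟩ := (hL'mem _).mp hyL
        obtain ⟨z, hzQ', hze0⟩ := hyQ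
        have hze : r • z = y i := hze0
        obtain ⟨q, hq, hqe0⟩ := hzQ'
        have hqe : π q = z := hqe0
        have hyq : π ((r : ℝ) • q) = y i := by rw [map_smul, hqe, hze]
        have hker1 : π (x - r • q) = 0 := by rw [map_sub, hxe, hyq, sub_self]
        obtain ⟨t, hte⟩ := Submodule.mem_span_singleton.mp (hker _ hker1)
        refine ⟨x - (round t : ℤ) • w, sub_mem hxL (AddSubgroup.zsmul_mem L hwL _), ?_, ?_⟩
        · rw [map_sub, map_zsmul, hπw, smul_zero, sub_zero, hxe]
        · have h6 : x = r • q + t • w := by rw [hte]; abel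
          have hxq : x - (round t : ℤ) • w = r • q + (t - (round t : ℝ)) • w := by
            rw [h6, ← Int.cast_smul_eq_zsmul ℝ, sub_smul]; abel
          rw [hxq]
          exact my_add_mem_smul hQc hr.le (by positivity)
            (Set.smul_mem_smul_set hq) (hsmulw _ (abs_sub_round t))
      choose x hxL hxπ hxQ using hlift
      have hcomp : (⇑π.toLinearMap ∘ x) = y := funext fun i => hxπ i
      have hxind : LinearIndependent ℝ x := LinearIndependent.of_comp π.toLinearMap (hcomp ▸ hyind)
      have hwnotspan : w ∉ Submodule.span ℝ (Set.range x) := by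
        intro hmem
        obtain ⟨c, hc⟩ := (Submodule.mem_span_range_iff_exists_fun ℝ).mp hmem
        have h9 : ∑ i, c i • y i = 0 := by
          have h10 : π (∑ i, c i • x i) = π w := congrArg (⇑π) hc
          rw [map_sum, hπw] at h10
          rw [← h10]
          apply Finset.sum_congr rfl
          intro i _
          rw [map_smul, hxπ]
        have hc0 := Fintype.linearIndependent_iff.mp hyind c h9
        apply hwne
        rw [← hc]
        apply Finset.sum_eq_zero
        intro i _
        rw [hc0 i, zero_smul]
      have hconsind : LinearIndependent ℝ (Fin.cons w x : Fin (j+1) → Euc d) :=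
        linearIndependent_fin_cons.mpr ⟨hxind, hwnotspan⟩
      have hconsmem : ∀ i : Fin (j+1), (Fin.cons w x : Fin (j+1) → Euc d) i ∈ L ∧
          (Fin.cons w x : Fin (j+1) → Euc d) i ∈ (r + ra) • Q := by
        intro i
        refine Fin.cases ?_ ?_ i
        · rw [Fin.cons_zero]
          exact ⟨hwL, my_smul_subset hQc hQ0 hra_pos.le (by linarith) hwQ⟩
        · intro i'
          rw [Fin.cons_succ]
          exact ⟨hxL i', my_smul_subset hQc hQ0 (by positivity) (by linarith) (hxQ i')⟩
      have h10 : ρ (j+1) ≤ r + ra :=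
        hρ (j+1) (r+ra) (by omega) (by omega) (by linarith) _ hconsind hconsmem
      have h11 : s ≤ r + ra/2 := by
        refine hsle _ (by linarith) ⟨x ⟨0, by omega⟩, hxL _, hxind.ne_zero _, hxQ _⟩
      rw [hρ']
      simp only []
      linarith
    -- branch on k
    have hprodeq : ∀ k0 : ℕ, ∏ j ∈ Finset.Icc (k0+1) m, (6 * 7 ^ m / ρ' j)
        = ∏ j ∈ Finset.Icc (k0+2) (m+1), (6 * 7 ^ (m+1) / ρ j) := by
      intro k0
      have hmap : Finset.Icc (k0+2) (m+1) = (Finset.Icc (k0+1) m).map (addRightEmbedding 1) := by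
        rw [Finset.map_add_right_Icc]
      rw [hmap, Finset.prod_map]
      apply Finset.prod_congr rfl
      intro j hj
      have he : (addRightEmbedding 1) j = j + 1 := rfl
      rw [he, hρ']
      simp only []
      rw [div_div_eq_mul_div, pow_succ]
      ring
    rcases Nat.eq_zero_or_pos k with hk0 | hkpos
    · -- counting branch
      subst hk0
      obtain ⟨T', F', hT'V', hT'rk, hF'fin, hcov', hcard'⟩ :=
        IH 0 L' V' hL'V' hV'm (Nat.zero_le _) Q' hQ'c hQ's hQ'0 ρ' hρ'b hρ'hyp
      have hT'bot : T' = ⊥ := Submodule.finrank_eq_zero.mp hT'rk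
      have himg : ∀ x ∈ (L : Set (Euc d)) ∩ Q, π x ∈ F' := by
        intro x hx
        have h12 : π x ∈ (L' : Set (Euc d)) ∩ Q' :=
          ⟨(hL'mem _).mpr ⟨x, hx.1, rfl⟩, ⟨x, hx.2, rfl⟩⟩
        obtain ⟨f, hf, hxf⟩ := hcov' _ h12
        rw [hT'bot, Submodule.mem_bot, sub_eq_zero] at hxf
        rwa [hxf]
      classical
      set g : Euc d → Euc d := fun y =>
        if h : ∃ x, x ∈ (L : Set (Euc d)) ∩ Q ∧ π x = y then h.choose else 0 with hg
      have hgspec : ∀ x ∈ (L : Set (Euc d)) ∩ Q,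
          g (π x) ∈ (L : Set (Euc d)) ∩ Q ∧ π (g (π x)) = π x := by
        intro x hx
        have hex : ∃ x', x' ∈ (L : Set (Euc d)) ∩ Q ∧ π x' = π x := ⟨x, hx, rfl⟩
        rw [hg]
        simp only [dif_pos hex]
        exact hex.choose_spec
      have hnex : ∀ x ∈ (L : Set (Euc d)) ∩ Q, ∃ n : ℤ, x - g (π x) = (n : ℝ) • w := by
        intro x hx
        obtain ⟨hgx, hgπ⟩ := hgspec x hx
        have h13 : π (x - g (π x)) = 0 := by rw [map_sub, hgπ, sub_self]
        obtain ⟨t, hte⟩ := Submodule.mem_span_singleton.mp (hker _ h13)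
        have h14 : t • w ∈ L := by
          rw [hte]; exact sub_mem hx.1 hgx.1
        obtain ⟨n, rfl⟩ := hprim t h14
        exact ⟨n, hte.symm⟩
      set ν : Euc d → ℤ := fun x =>
        if h : ∃ n : ℤ, x - g (π x) = (n : ℝ) • w then h.choose else 0 with hν
      have hνspec : ∀ x ∈ (L : Set (Euc d)) ∩ Q, x - g (π x) = ((ν x : ℤ) : ℝ) • w := by
        intro x hx
        have hex := hnex x hx
        rw [hν]
        simp only [dif_pos hex]
        exact hex.choose_spec
      set N : ℤ := ⌊2 / ρ 1⌋ with hN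
      have hNnn : 0 ≤ N := Int.floor_nonneg.mpr (div_nonneg (by norm_num) hρ1.1.le)
      have hνbound : ∀ x ∈ (L : Set (Euc d)) ∩ Q, ν x ∈ Finset.Icc (-N) N := by
        intro x hx
        rw [Finset.mem_Icc, ← abs_le]
        by_cases hν0 : ν x = 0
        · simp [hν0, hNnn]
        · have hxx := hνspec x hx
          have hgx := (hgspec x hx).1
          have hmem2 : x - g (π x) ∈ (2:ℝ) • Q := by
            have hmid : (1/2 : ℝ) • x + (1/2 : ℝ) • (-(g (π x))) ∈ Q :=
              hQc hx.2 (hQneg _ hgx.2) (by norm_num) (by norm_num) (by norm_num)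
            have he : x - g (π x) = (2:ℝ) • ((1/2 : ℝ) • x + (1/2 : ℝ) • (-(g (π x)))) := by
              rw [smul_add, smul_smul, smul_smul]
              norm_num
              abel
            rw [he]
            exact Set.smul_mem_smul_set hmid
          have hν' : ((ν x : ℤ) : ℝ) ≠ 0 := Int.cast_ne_zero.mpr hν0
          have hwmem : w ∈ (2 / |((ν x : ℤ) : ℝ)|) • Q := by
            rw [hxx] at hmem2
            obtain ⟨q, hq, hqe0⟩ := hmem2
            have hqe : (2:ℝ) • q = ((ν x : ℤ) : ℝ) • w := hqe0
            have hwe : w = ((2:ℝ) / ((ν x : ℤ) : ℝ)) • q := by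
              have h15 := congrArg (fun z => (((ν x : ℤ) : ℝ))⁻¹ • z) hqe
              simp only [smul_smul, inv_mul_cancel₀ hν', one_smul] at h15
              rw [← h15, div_eq_inv_mul, ← smul_smul]
            rw [hwe]
            have h16 := my_mem_abs_smul hQs hq (c := (2:ℝ) / ((ν x : ℤ) : ℝ))
            rwa [abs_div, abs_two] at h16
          have h15 : s ≤ 2 / |((ν x : ℤ) : ℝ)| :=
            hsle _ (by positivity) ⟨w, hwL, hwne, hwmem⟩
          have habs : (0:ℝ) < |((ν x : ℤ) : ℝ)| := abs_pos.mpr hν'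
          have h16 : ρ 1 ≤ 2 / |((ν x : ℤ) : ℝ)| := le_trans hρ1s h15
          rw [le_div_iff₀ habs] at h16
          have h17 : (|(ν x)| : ℝ) ≤ 2 / ρ 1 := by
            rw [le_div_iff₀ hρ1.1]
            push_cast
            nlinarith [hρ1.1]
          exact Int.le_floor.mpr (by rw [Int.cast_abs]; exact h17)
      set Φ : Euc d → Euc d × ℤ := fun x => (π x, ν x) with hΦ
      have hinj : Set.InjOn Φ ((L : Set (Euc d)) ∩ Q) := by
        intro a ha b hb hab
        have h1 : π a = π b := congrArg Prod.fst hab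
        have h2 : ν a = ν b := congrArg Prod.snd hab
        have ha' := hνspec a ha
        have hb' := hνspec b hb
        have h3 : a = g (π a) + ((ν a : ℤ) : ℝ) • w := by
          rw [← ha']; abel
        have h4 : b = g (π b) + ((ν b : ℤ) : ℝ) • w := by
          rw [← hb']; abel
        rw [h3, h4, h1, h2]
      have himsub : Φ '' ((L : Set (Euc d)) ∩ Q) ⊆
          ↑(hF'fin.toFinset ×ˢ Finset.Icc (-N) N) := by
        rintro _ ⟨x, hx, rfl⟩
        rw [Finset.coe_product]
        refine ⟨?_, ?_⟩
        · simp only [Finset.mem_coe, Set.Finite.mem_toFinset]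
          exact himg x hx
        · simp only [Finset.mem_coe]
          exact hνbound x hx
      have hAfin : ((L : Set (Euc d)) ∩ Q).Finite := by
        have himfin : (Φ '' ((L : Set (Euc d)) ∩ Q)).Finite :=
          Set.Finite.subset (Finset.finite_toSet _) himsub
        exact Set.Finite.of_finite_image himfin hinj
      have hcard : ((L : Set (Euc d)) ∩ Q).ncard ≤ F'.ncard * (Finset.Icc (-N) N).card := by
        rw [← Set.ncard_image_of_injOn hinj]
        calc (Φ '' ((L : Set (Euc d)) ∩ Q)).ncard
            ≤ ((hF'fin.toFinset ×ˢ Finset.Icc (-N) N : Finset (Euc d × ℤ)) : Set (Euc d × ℤ)).ncard :=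
              Set.ncard_le_ncard himsub (Finset.finite_toSet _)
          _ = (hF'fin.toFinset ×ˢ Finset.Icc (-N) N).card := Set.ncard_coe_finset _
          _ = hF'fin.toFinset.card * (Finset.Icc (-N) N).card := Finset.card_product _ _
          _ = F'.ncard * (Finset.Icc (-N) N).card := by rw [Set.ncard_eq_toFinset_card F' hF'fin]
      -- assemble k = 0 answer
      have hIccR : ((Finset.Icc (-N) N).card : ℝ) ≤ 6 / ρ 1 := by
        rw [Int.card_Icc]
        have he : N + 1 - -N = 2*N + 1 := by ring
        rw [he]
        have hNle : (N : ℝ) ≤ 2 / ρ 1 := Int.floor_le _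
        have hcast : (((2*N+1).toNat : ℤ) : ℝ) = 2*(N:ℝ) + 1 := by
          rw [Int.toNat_of_nonneg (by omega)]
          push_cast
          ring
        have h1' : (1:ℝ) ≤ 2 / ρ 1 := by
          rw [le_div_iff₀ hρ1.1]; linarith [hρ1.2]
        have : ((2*N+1).toNat : ℝ) = 2*(N:ℝ) + 1 := by exact_mod_cast hcast
        rw [this]
        rw [div_eq_mul_inv (6:ℝ), show (6:ℝ) = 2*2+2 by norm_num] at *
        calc 2*(N:ℝ) + 1 ≤ 2*(2/ρ 1) + (2/ρ 1) := by linarith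
          _ = (2*2+2) * (ρ 1)⁻¹ := by rw [div_eq_mul_inv]; ring
      have hF'pos : (0:ℝ) ≤ ∏ j ∈ Finset.Icc 2 (m+1), (6 * 7 ^ (m+1) / ρ j) := by
        apply Finset.prod_nonneg
        intro j hj
        obtain ⟨h1, h2⟩ := Finset.mem_Icc.mp hj
        have := (hρb j (by omega) h2).1
        positivity
      have hsplit : ∏ j ∈ Finset.Icc 1 (m+1), (6 * 7 ^ (m+1) / ρ j)
          = (6 * 7 ^ (m+1) / ρ 1) * ∏ j ∈ Finset.Icc 2 (m+1), (6 * 7 ^ (m+1) / ρ j) := by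
        have hins : insert 1 (Finset.Icc 2 (m+1)) = Finset.Icc 1 (m+1) := by
          rw [show (2:ℕ) = 1 + 1 from rfl, Finset.Icc_add_one_left_eq_Ioc]
          exact Finset.Ioc_insert_left (by omega)
        rw [← hins, Finset.prod_insert (by simp)]
      refine ⟨⊥, (L : Set (Euc d)) ∩ Q, bot_le, by rw [finrank_bot], hAfin, ?_, ?_⟩
      · intro x hx
        exact ⟨x, hx, by simp⟩
      · have hc1 : (((L : Set (Euc d)) ∩ Q).ncard : ℝ)
            ≤ (F'.ncard : ℝ) * ((Finset.Icc (-N) N).card : ℝ) := by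
          exact_mod_cast Nat.cast_le.mpr hcard
        have hc2 : (F'.ncard : ℝ) ≤ ∏ j ∈ Finset.Icc 2 (m+1), (6 * 7 ^ (m+1) / ρ j) := by
          have := hcard'
          rwa [hprodeq 0] at this
        have hc3 : (((L : Set (Euc d)) ∩ Q).ncard : ℝ)
            ≤ (∏ j ∈ Finset.Icc 2 (m+1), (6 * 7 ^ (m+1) / ρ j)) * (6 / ρ 1) := by
          calc (((L : Set (Euc d)) ∩ Q).ncard : ℝ)
              ≤ (F'.ncard : ℝ) * ((Finset.Icc (-N) N).card : ℝ) := hc1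
            _ ≤ (∏ j ∈ Finset.Icc 2 (m+1), (6 * 7 ^ (m+1) / ρ j)) * (6 / ρ 1) := by
                apply mul_le_mul hc2 hIccR (Nat.cast_nonneg _) hF'pos
        rw [zero_add, hsplit]
        refine hc3.trans ?_
        rw [mul_comm]
        apply mul_le_mul_of_nonneg_right ?_ hF'pos
        have h67 : (6:ℝ) ≤ 6 * 7 ^ (m+1) := by
          nlinarith [one_le_pow₀ (by norm_num : (1:ℝ) ≤ 7) (n := m+1)]
        rw [div_eq_mul_inv, div_eq_mul_inv]
        exact mul_le_mul_of_nonneg_right h67 (inv_nonneg.mpr hρ1.1.le)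
    · -- subspace branch, k ≥ 1
      obtain ⟨k', rfl⟩ : ∃ k', k = k' + 1 := ⟨k - 1, by omega⟩
      have hk'V' : k' ≤ Module.finrank ℝ V' := by omega
      obtain ⟨T', F', hT'V', hT'rk, hF'fin, hcov', hcard'⟩ :=
        IH k' L' V' hL'V' hV'm hk'V' Q' hQ'c hQ's hQ'0 ρ' hρ'b hρ'hyp
      set T : Submodule ℝ (Euc d) := (ℝ ∙ w) ⊔ T' with hT
      have hT'U : T' ≤ U := le_trans hT'V' inf_le_right
      have hTV : T ≤ V := sup_le hspanV (le_trans hT'V' inf_le_left)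
      have hdisj : (ℝ ∙ w : Submodule ℝ (Euc d)) ⊓ T' = ⊥ := by
        rw [eq_bot_iff]
        intro z hz
        obtain ⟨hz1, hz2⟩ := Submodule.mem_inf.mp hz
        have hzU : z ∈ U := hT'U hz2
        have h1 : (inner ℝ z z : ℝ) = 0 :=
          (Submodule.mem_orthogonal _ z).mp hzU z hz1
        simpa [Submodule.mem_bot] using inner_self_eq_zero.mp h1
      have hTrk : Module.finrank ℝ T = k' + 1 := by
        have h1 := Submodule.finrank_sup_add_finrank_inf_eq (ℝ ∙ w : Submodule ℝ (Euc d)) T'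
        rw [hdisj, finrank_span_singleton hwne, hT'rk] at h1
        have h2 : Module.finrank ℝ (⊥ : Submodule ℝ (Euc d)) = 0 := finrank_bot ℝ _
        rw [h2] at h1
        rw [hT]
        omega
      refine ⟨T, F', hTV, hTrk, hF'fin, ?_, ?_⟩
      · intro x hx
        have h12 : π x ∈ (L' : Set (Euc d)) ∩ Q' :=
          ⟨(hL'mem _).mpr ⟨x, hx.1, rfl⟩, ⟨x, hx.2, rfl⟩⟩
        obtain ⟨f, hf, hxf⟩ := hcov' _ h12
        refine ⟨f, hf, ?_⟩
        have he : x - f = (x - π x) + (π x - f) := by abel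
        rw [he, hT]
        exact Submodule.add_mem _ (Submodule.mem_sup_left (hπsub x))
          (Submodule.mem_sup_right hxf)
      · refine hcard'.trans (le_of_eq ?_)
        exact hprodeq k'

end MyAux

theorem statement5 (d k : ℕ) (hk1 : 1 ≤ k) (hkd : k + 1 ≤ d) :
    ∃ C : ℝ, 0 < C ∧
      ∀ (Λ K : Set (Euc d)), IsLattice Λ → IsSymmConvexBody K →
        succMin Λ K d ≤ 1 →
        ∃ S : Finset (AffineSubspace ℝ (Euc d)),
          (∀ A ∈ S, (A : Set (Euc d)).Nonempty ∧ Module.finrank ℝ A.direction = k) ∧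
          (∀ x ∈ Λ ∩ K, ∃ A ∈ S, x ∈ A) ∧
          (S.card : ℝ) ≤ C * (∏ i ∈ Finset.Icc (k+1) d, succMin Λ K i)⁻¹ := by
  classical
  refine ⟨(6 * 7 ^ d) ^ d, by positivity, ?_⟩
  intro Λ K hΛ hK hsmd
  obtain ⟨b, hbli, hbeq⟩ := hΛ
  obtain ⟨hKc, hKconv, hKint, hKsymm⟩ := hK
  have hmemΛ : ∀ x, x ∈ Λ ↔ ∃ c : Fin d → ℤ, x = ∑ i, (c i : ℝ) • b i := by
    intro x; rw [hbeq]; exact Iff.rfl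
  set L : AddSubgroup (Euc d) :=
    { carrier := Λ
      add_mem' := by
        rintro x y hx hy
        obtain ⟨c, rfl⟩ := (hmemΛ x).mp hx
        obtain ⟨c', rfl⟩ := (hmemΛ y).mp hy
        refine (hmemΛ _).mpr ⟨c + c', ?_⟩
        rw [← Finset.sum_add_distrib]
        apply Finset.sum_congr rfl
        intro i _
        simp only [Pi.add_apply, Int.cast_add, add_smul]
      zero_mem' := (hmemΛ 0).mpr ⟨0, by simp⟩
      neg_mem' := by
        rintro x hx
        obtain ⟨c, rfl⟩ := (hmemΛ x).mp hx
        refine (hmemΛ _).mpr ⟨-c, ?_⟩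
        rw [← Finset.sum_neg_distrib]
        apply Finset.sum_congr rfl
        intro i _
        simp only [Pi.neg_apply, Int.cast_neg, neg_smul] } with hL
  have hLmem : ∀ x : Euc d, x ∈ L ↔ x ∈ Λ := fun x => Iff.rfl
  set S : ℕ → Set ℝ := fun i => {r : ℝ | 0 < r ∧ ∃ v : Fin i → Euc d,
    LinearIndependent ℝ v ∧ ∀ j, v j ∈ Λ ∧ v j ∈ r • K} with hSdef
  have hsucc : ∀ i, succMin Λ K i = sInf (S i) := fun i => rfl
  have hbdd : ∀ i, BddBelow (S i) := fun i => ⟨0, fun r hr => hr.1.le⟩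
  -- 0 in interior of K
  have h0int : (0 : Euc d) ∈ interior K := by
    obtain ⟨x0, hx0⟩ := hKint
    have hneg : -x0 ∈ interior K := by
      have hK1 : -K = (-1:ℝ) • K := by
        ext z
        constructor
        · intro hz
          exact ⟨-z, Set.mem_neg.mp hz, by simp⟩
        · rintro ⟨q, hq, rfl⟩
          rw [Set.mem_neg]
          simpa using hq
      have h2 : -x0 ∈ interior (-K) := by
        rw [hK1, interior_smul₀ (by norm_num : (-1:ℝ) ≠ 0)]
        exact ⟨x0, hx0, by simp⟩
      rwa [← hKsymm] at h2
    have h0 : (0 : Euc d) = (1/2 : ℝ) • x0 + (1/2 : ℝ) • (-x0) := by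
      rw [smul_neg, add_neg_cancel]
    rw [h0]
    exact hKconv.interior hx0 hneg (by norm_num) (by norm_num) (by norm_num)
  have h0K : (0 : Euc d) ∈ K := interior_subset h0int
  obtain ⟨ε, hεpos, hball⟩ := Metric.mem_nhds_iff.mp (mem_interior_iff_mem_nhds.mp h0int)
  have hKball : Metric.ball (0 : Euc d) ε ⊆ K := hball
  -- S d nonempty
  have hSdne : (S d).Nonempty := by
    set r : ℝ := (∑ i, ‖b i‖) / ε + 1 with hr
    have hsum : (0:ℝ) ≤ ∑ i, ‖b i‖ := Finset.sum_nonneg fun i _ => norm_nonneg _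
    have hrpos : 0 < r := by positivity
    refine ⟨r, hrpos, b, hbli, fun j => ⟨?_, ?_⟩⟩
    · refine (hmemΛ _).mpr ⟨fun i => if i = j then 1 else 0, ?_⟩
      rw [Finset.sum_eq_single j]
      · simp
      · intro i _ hij; simp [hij]
      · intro h; exact absurd (Finset.mem_univ j) h
    · refine ⟨r⁻¹ • b j, hKball ?_, show r • (r⁻¹ • b j) = b j by
        rw [smul_smul, mul_inv_cancel₀ hrpos.ne', one_smul]⟩
      rw [mem_ball_zero_iff, norm_smul, Real.norm_eq_abs, abs_of_pos (inv_pos.mpr hrpos)]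
      have h1 : ‖b j‖ ≤ ∑ i, ‖b i‖ := Finset.single_le_sum (fun i _ => norm_nonneg _) (Finset.mem_univ j)
      rw [inv_mul_lt_iff₀ hrpos, hr]
      calc ‖b j‖ ≤ ∑ i, ‖b i‖ := h1
        _ < ((∑ i, ‖b i‖) / ε + 1) * ε := by
            rw [add_mul, div_mul_cancel₀ _ hεpos.ne']
            nlinarith
  have hSsub : ∀ i j, i ≤ j → S j ⊆ S i := by
    intro i j hij r hrr
    obtain ⟨hrpos, v, hvli, hv⟩ := hrr
    exact ⟨hrpos, v ∘ Fin.castLE hij, hvli.comp _ (Fin.castLE_injective hij), fun l => hv _⟩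
  have hSne : ∀ i, i ≤ d → (S i).Nonempty :=
    fun i hi => ⟨hSdne.choose, hSsub i d hi hSdne.choose_spec⟩
  have hmono : ∀ i j, i ≤ j → j ≤ d → succMin Λ K i ≤ succMin Λ K j :=
    fun i j hij hjd => csInf_le_csInf (hbdd i) (hSne j hjd) (hSsub i j hij)
  -- boundedness of K
  obtain ⟨R0, hR0⟩ := hKc.isBounded.subset_closedBall (0 : Euc d)
  set R : ℝ := max R0 1 with hR
  have hRpos : (0:ℝ) < R := lt_of_lt_of_le one_pos (le_max_right _ _)
  have hKR : ∀ z ∈ K, ‖z‖ ≤ R := by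
    intro z hz
    have h1 := hR0 hz
    rw [mem_closedBall_zero_iff] at h1
    exact le_trans h1 (le_max_left _ _)
  -- discreteness
  haveI : Nonempty (Fin d) := ⟨⟨0, by omega⟩⟩
  have hcardeq : Fintype.card (Fin d) = Module.finrank ℝ (Euc d) := by
    rw [Fintype.card_fin, finrank_euclideanSpace_fin]
  set B := basisOfLinearIndependentOfCardEqFinrank hbli hcardeq with hB
  have hBcoe : ∀ i, B i = b i := fun i => by
    rw [hB, coe_basisOfLinearIndependentOfCardEqFinrank]
  set φ : Fin d → (Euc d →L[ℝ] ℝ) :=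
    fun i => LinearMap.toContinuousLinearMap (B.coord i) with hφ
  set M : ℝ := ∑ i, ‖φ i‖ with hM
  have hMnn : 0 ≤ M := Finset.sum_nonneg fun i _ => norm_nonneg _
  set δ : ℝ := 1 / (M + 1) with hδ
  have hδpos : 0 < δ := by positivity
  have hdisc : ∀ x ∈ Λ, x ≠ 0 → δ ≤ ‖x‖ := by
    intro x hx hxne
    by_contra hlt
    push_neg at hlt
    obtain ⟨c, rfl⟩ := (hmemΛ x).mp hx
    have hc0 : ∀ i, c i = 0 := by
      intro i
      have h1 : φ i (∑ l, (c l : ℝ) • b l) = c i := by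
        rw [hφ]
        simp only [LinearMap.coe_toContinuousLinearMap']
        rw [map_sum]
        rw [Finset.sum_eq_single i]
        · rw [map_smul, ← hBcoe, Module.Basis.coord_apply, Module.Basis.repr_self]
          simp
        · intro l _ hli
          rw [map_smul, ← hBcoe, Module.Basis.coord_apply, Module.Basis.repr_self]
          simp [Finsupp.single_apply, hli]
        · intro h; exact absurd (Finset.mem_univ i) h
      have h2 : |(c i : ℝ)| ≤ ‖φ i‖ * ‖∑ l, (c l : ℝ) • b l‖ := by
        rw [← h1]
        exact (φ i).le_opNorm _
      have h3 : ‖φ i‖ ≤ M := Finset.single_le_sum (fun l _ => norm_nonneg _) (Finset.mem_univ i)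
      have h4 : |(c i : ℝ)| < 1 := by
        have h5 : ‖φ i‖ * ‖∑ l, (c l : ℝ) • b l‖ ≤ M * δ := by
          apply mul_le_mul h3 hlt.le (norm_nonneg _) hMnn
        have h6 : M * δ < 1 := by
          rw [hδ]
          rw [mul_one_div, div_lt_one (by linarith)]
          linarith
        linarith
      have h7 : |c i| < 1 := by exact_mod_cast h4
      exact Int.abs_lt_one_iff.mp h7
    apply hxne
    apply Finset.sum_eq_zero
    intro i _
    rw [hc0 i]
    simp
  have hS1lb : ∀ r ∈ S 1, δ / R ≤ r := by
    rintro r ⟨hrpos, v, hvli, hv⟩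
    have hvne : v 0 ≠ 0 := hvli.ne_zero 0
    obtain ⟨hvΛ, hvK⟩ := hv 0
    obtain ⟨q, hq, hqe0⟩ := hvK
    have hqe : r • q = v 0 := hqe0
    have h1 : δ ≤ ‖v 0‖ := hdisc _ hvΛ hvne
    have h2 : ‖v 0‖ ≤ r * R := by
      rw [← hqe, norm_smul, Real.norm_eq_abs, abs_of_pos hrpos]
      exact mul_le_mul_of_nonneg_left (hKR q hq) hrpos.le
    rw [div_le_iff₀ hRpos]
    linarith
  have hsm1pos : 0 < succMin Λ K 1 :=
    lt_of_lt_of_le (by positivity) (le_csInf (hSne 1 (by omega)) hS1lb)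
  have hsmpos : ∀ i, 1 ≤ i → i ≤ d → 0 < succMin Λ K i :=
    fun i h1 h2 => lt_of_lt_of_le hsm1pos (hmono 1 i h1 h2)
  have hsmle1 : ∀ i, i ≤ d → succMin Λ K i ≤ 1 :=
    fun i h2 => le_trans (hmono i d h2 le_rfl) hsmd
  -- apply the main lemma
  have hrkTop : Module.finrank ℝ (⊤ : Submodule ℝ (Euc d)) = d := by
    rw [finrank_top, finrank_euclideanSpace_fin]
  obtain ⟨T, F, hTV, hTrk, hFfin, hcov, hcard⟩ :=
    my_lemmaC d d k L ⊤ (fun x _ => Submodule.mem_top) (le_of_eq hrkTop)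
      (by omega) K hKconv hKsymm h0K (fun i => succMin Λ K i)
      (fun j h1 h2 => ⟨hsmpos j h1 h2, le_trans (hsmle1 j h2) one_le_two⟩)
      (fun j r h1 h2 hr x hxli hx =>
        csInf_le (hbdd j) ⟨hr, x, hxli, fun i => ⟨(hx i).1, (hx i).2⟩⟩)
  set Fs : Finset (Euc d) := hFfin.toFinset with hFs
  refine ⟨Fs.image (fun f => AffineSubspace.mk' f T), ?_, ?_, ?_⟩
  · intro A hA
    obtain ⟨f, hf, rfl⟩ := Finset.mem_image.mp hA
    refine ⟨⟨f, AffineSubspace.self_mem_mk' f T⟩, ?_⟩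
    rw [AffineSubspace.direction_mk']
    exact hTrk
  · intro x hx
    obtain ⟨f, hf, hxf⟩ := hcov x hx
    refine ⟨AffineSubspace.mk' f T,
      Finset.mem_image_of_mem _ (hFfin.mem_toFinset.mpr hf), ?_⟩
    rw [AffineSubspace.mem_mk']
    simpa [vsub_eq_sub] using hxf
  · have hcardIcc : (Finset.Icc (k+1) d).card ≤ d := by
      rw [Nat.card_Icc]; omega
    have ha1 : (1:ℝ) ≤ 6 * 7 ^ d := by
      nlinarith [one_le_pow₀ (by norm_num : (1:ℝ) ≤ 7) (n := d)]
    have hprodpos : 0 < ∏ j ∈ Finset.Icc (k+1) d, succMin Λ K j := by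
      apply Finset.prod_pos
      intro j hj
      obtain ⟨h1, h2⟩ := Finset.mem_Icc.mp hj
      exact hsmpos j (by omega) h2
    calc ((Fs.image (fun f => AffineSubspace.mk' f T)).card : ℝ)
        ≤ (Fs.card : ℝ) := by exact_mod_cast Finset.card_image_le
      _ = (F.ncard : ℝ) := by rw [hFs, Set.ncard_eq_toFinset_card F hFfin]
      _ ≤ ∏ j ∈ Finset.Icc (k+1) d, (6 * 7 ^ d / succMin Λ K j) := hcard
      _ ≤ (6 * 7 ^ d) ^ d * (∏ i ∈ Finset.Icc (k+1) d, succMin Λ K i)⁻¹ := by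
          rw [Finset.prod_div_distrib, Finset.prod_const, div_eq_mul_inv]
          apply mul_le_mul_of_nonneg_right (pow_le_pow_right₀ ha1 hcardIcc)
            (inv_nonneg.mpr hprodpos.le)
end
end

section
/- Let d and k be integers with 1 ≤ k ≤ d−1. There is a constant c = c(d,k) > 0 such that the following holds. Let Λ be a d-dimensional lattice in ℝ^d and let K ∈ K^d, and set λ_i := λ_i(Λ,K) for i = 1,…,d. If λ_d ≤ 1, then every family of k-dimensional affine subspaces of ℝ^d that covers Λ ∩ K has at least c·(λ_{k+1}·λ_{k+2}·⋯·λ_d)^{−1} members. -/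
open scoped BigOperators Pointwise
open Metric

noncomputable section

lemma zero_mem_int {d : ℕ} {K : Set (Euc d)} (hK : IsSymmConvexBody K) :
    0 ∈ interior K := by
  obtain ⟨-, hconv, ⟨x, hx⟩, hsymm⟩ := hK
  have hx' : -x ∈ interior K := by
    obtain ⟨U, hUK, hUo, hxU⟩ := mem_interior.1 hx
    refine mem_interior.2 ⟨-U, ?_, ?_, ?_⟩
    · intro y hy
      have : -y ∈ K := hUK hy
      rw [hsymm, Set.mem_neg]
      simpa using this
    · exact (continuous_neg.isOpen_preimage U hUo)
    · simpa using hxU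
  have := (hconv.interior) hx hx' (by norm_num : (0:ℝ) ≤ 1/2)
    (by norm_num : (0:ℝ) ≤ 1/2) (by norm_num)
  simpa using this

lemma zero_mem_K {d : ℕ} {K : Set (Euc d)} (hK : IsSymmConvexBody K) : (0 : Euc d) ∈ K :=
  interior_subset (zero_mem_int hK)

lemma smul_mono_K {d : ℕ} {K : Set (Euc d)} (hK : IsSymmConvexBody K) {r s : ℝ}
    (hr : 0 < r) (hrs : r ≤ s) : r • K ⊆ s • K := by
  intro x hx
  obtain ⟨y, hy, rfl⟩ := hx
  have hs : 0 < s := lt_of_lt_of_le hr hrs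
  have ha : (0:ℝ) ≤ r/s := by positivity
  have hb : (0:ℝ) ≤ 1 - r/s := by
    rw [sub_nonneg]; exact (div_le_one hs).2 hrs
  refine ⟨(r/s) • y, ?_, ?_⟩
  · have := hK.2.1 hy (zero_mem_K hK) ha hb (by ring)
    simpa using this
  · show s • ((r/s) • y) = r • y
    rw [smul_smul, mul_div_cancel₀ _ (ne_of_gt hs)]


def minSet {d : ℕ} (Λ K : Set (Euc d)) (i : ℕ) : Set ℝ :=
  {r : ℝ | 0 < r ∧ ∃ v : Fin i → Euc d,
    LinearIndependent ℝ v ∧ ∀ j, v j ∈ Λ ∧ v j ∈ r • K}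

lemma succMin_eq {d : ℕ} (Λ K : Set (Euc d)) (i : ℕ) :
    succMin Λ K i = sInf (minSet Λ K i) := rfl

lemma minSet_bdd {d : ℕ} (Λ K : Set (Euc d)) (i : ℕ) : BddBelow (minSet Λ K i) :=
  ⟨0, fun r hr => le_of_lt hr.1⟩

lemma succMin_nonneg {d : ℕ} (Λ K : Set (Euc d)) (i : ℕ) : 0 ≤ succMin Λ K i :=
  Real.sInf_nonneg (fun r hr => le_of_lt hr.1)

lemma basis_mem_lattice {d : ℕ} {Λ : Set (Euc d)} {b : Fin d → Euc d}
    (hb : Λ = {x : Euc d | ∃ c : Fin d → ℤ, x = ∑ i, (c i : ℝ) • b i}) (j : Fin d) :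
    b j ∈ Λ := by
  rw [hb]
  refine ⟨fun i => if i = j then 1 else 0, ?_⟩
  rw [Finset.sum_eq_single j] <;> simp +contextual

lemma minSet_nonempty {d : ℕ} {Λ K : Set (Euc d)} (hL : IsLattice Λ)
    (hK : IsSymmConvexBody K) {m : ℕ} (hm : m ≤ d) : (minSet Λ K m).Nonempty := by
  obtain ⟨b, hbi, hbeq⟩ := hL
  obtain ⟨δ, hδ, hball⟩ := Metric.mem_nhds_iff.1
    (mem_interior_iff_mem_nhds.1 (zero_mem_int hK))
  set R : ℝ := (∑ i, ‖b i‖) / δ + 1 with hR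
  have hRpos : 0 < R := by positivity
  refine ⟨R, hRpos, fun i => b (Fin.castLE hm i), hbi.comp _ (Fin.castLE_injective hm), ?_⟩
  intro j
  refine ⟨basis_mem_lattice hbeq _, ?_⟩
  refine ⟨R⁻¹ • b (Fin.castLE hm j), hball ?_, ?_⟩
  · rw [Metric.mem_ball, dist_zero_right, norm_smul, Real.norm_eq_abs,
      abs_of_pos (by positivity)]
    have h1 : ‖b (Fin.castLE hm j)‖ ≤ ∑ i, ‖b i‖ :=
      Finset.single_le_sum (f := fun i => ‖b i‖) (fun i _ => norm_nonneg _)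
        (Finset.mem_univ _)
    have h2 : ∑ i, ‖b i‖ < R * δ := by
      rw [hR, add_mul, div_mul_cancel₀ _ (ne_of_gt hδ), one_mul]
      linarith
    calc R⁻¹ * ‖b (Fin.castLE hm j)‖ < R⁻¹ * (R * δ) := by
          apply mul_lt_mul_of_pos_left (lt_of_le_of_lt h1 h2) (by positivity)
      _ = δ := by field_simp
  · show R • (R⁻¹ • _) = _
    rw [smul_smul, mul_inv_cancel₀ (ne_of_gt hRpos), one_smul]

lemma succMin_mono {d : ℕ} {Λ K : Set (Euc d)} (hL : IsLattice Λ)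
    (hK : IsSymmConvexBody K) {i j : ℕ} (hij : i ≤ j) (hjd : j ≤ d) :
    succMin Λ K i ≤ succMin Λ K j := by
  rw [succMin_eq, succMin_eq]
  apply csInf_le_csInf (minSet_bdd Λ K i) (minSet_nonempty hL hK hjd)
  rintro r ⟨hr, v, hv, hmem⟩
  exact ⟨hr, fun t => v (Fin.castLE hij t), hv.comp _ (Fin.castLE_injective hij),
    fun t => hmem _⟩

lemma exists_w {d k : ℕ} {Λ K : Set (Euc d)} (hL : IsLattice Λ) (hK : IsSymmConvexBody K)
    (hkd : k + 1 ≤ d) (hε : 0 < succMin Λ K (k+1)) :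
    ∀ m : ℕ, m ≤ d → ∃ w : Fin m → Euc d, LinearIndependent ℝ w ∧
      ∀ i : Fin m, w i ∈ Λ ∧
        w i ∈ (succMin Λ K (max ((i : ℕ)+1) (k+1)) + succMin Λ K (k+1)) • K := by
  intro m
  induction m with
  | zero =>
    intro _
    exact ⟨fun i => 0, linearIndependent_empty_type, fun i => i.elim0⟩
  | succ m ih =>
    intro hm1
    obtain ⟨w, hwind, hwmem⟩ := ih (le_trans (Nat.le_succ m) hm1)
    set m' : ℕ := max (m+1) (k+1) with hm'def
    have hm'd : m' ≤ d := max_le hm1 hkd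
    have hlt : sInf (minSet Λ K m') < succMin Λ K m' + succMin Λ K (k+1) :=
      lt_add_of_pos_right _ hε
    obtain ⟨r, hrmem, hrlt⟩ := exists_lt_of_csInf_lt (minSet_nonempty hL hK hm'd) hlt
    obtain ⟨hrpos, v, hvind, hvmem⟩ := hrmem
    have hj : ∃ j, v j ∉ Submodule.span ℝ (Set.range w) := by
      by_contra h
      push_neg at h
      have hle : Submodule.span ℝ (Set.range v) ≤ Submodule.span ℝ (Set.range w) := by
        rw [Submodule.span_le]; rintro x ⟨j, rfl⟩; exact h j
      have h1 : Module.finrank ℝ (Submodule.span ℝ (Set.range v)) = m' := by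
        rw [finrank_span_eq_card hvind]; simp
      have h2 : Module.finrank ℝ (Submodule.span ℝ (Set.range w)) = m := by
        rw [finrank_span_eq_card hwind]; simp
      have := Submodule.finrank_mono hle
      rw [h1, h2] at this
      omega
    obtain ⟨j, hj⟩ := hj
    refine ⟨Fin.snoc w (v j), ?_, ?_⟩
    · rw [linearIndependent_fin_snoc]; exact ⟨hwind, hj⟩
    · intro i
      refine Fin.lastCases ?_ ?_ i
      · rw [Fin.snoc_last]
        refine ⟨(hvmem j).1, ?_⟩
        have : ((Fin.last m : Fin (m+1)) : ℕ) + 1 = m + 1 := by simp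
        rw [this]
        exact smul_mono_K hK hrpos (le_of_lt hrlt) (hvmem j).2
      · intro i
        rw [Fin.snoc_castSucc]
        have : ((Fin.castSucc i : Fin (m+1)) : ℕ) = (i : ℕ) := rfl
        rw [this]
        exact hwmem i

lemma exists_coords {d : ℕ} : ∀ (n : ℕ) (W : Submodule ℝ (Fin d → ℝ)),
    Module.finrank ℝ W ≤ n →
    ∃ J : Finset (Fin d), J.card ≤ n ∧ ∀ x ∈ W, (∀ j ∈ J, x j = 0) → x = 0 := by
  intro n
  induction n with
  | zero =>
    intro W hW
    refine ⟨∅, le_refl _, fun x hx _ => ?_⟩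
    have : W = ⊥ := Submodule.finrank_eq_zero.1 (Nat.le_zero.1 hW)
    rw [this] at hx
    simpa using hx
  | succ n ih =>
    intro W hW
    by_cases hbot : W = ⊥
    · refine ⟨∅, Nat.zero_le _, fun x hx _ => ?_⟩
      rw [hbot] at hx; simpa using hx
    · obtain ⟨x, hxW, hxne⟩ := Submodule.exists_mem_ne_zero_of_ne_bot hbot
      have : ∃ j, x j ≠ 0 := by
        by_contra h
        push_neg at h
        exact hxne (funext h)
      obtain ⟨j, hj⟩ := this
      set W' : Submodule ℝ (Fin d → ℝ) := W ⊓ LinearMap.ker (LinearMap.proj j) with hW'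
      have hlt : W' < W := by
        refine lt_of_le_of_ne inf_le_left ?_
        intro heq
        have : x ∈ W' := heq ▸ hxW
        exact hj (this.2)
      have hfr : Module.finrank ℝ W' ≤ n := by
        have := Submodule.finrank_lt_finrank_of_lt hlt
        omega
      obtain ⟨J', hJ'card, hJ'⟩ := ih W' hfr
      refine ⟨insert j J', le_trans (Finset.card_insert_le _ _) (by omega), ?_⟩
      intro y hy hyz
      refine hJ' y ⟨hy, ?_⟩ (fun t ht => hyz t (Finset.mem_insert_of_mem ht))
      simpa using hyz j (Finset.mem_insert_self _ _)

lemma lattice_combo {d : ℕ} {Λ : Set (Euc d)} (hL : IsLattice Λ)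
    {w : Fin d → Euc d} (hw : ∀ i, w i ∈ Λ) (c : Fin d → ℕ) :
    ∑ i, (c i : ℝ) • w i ∈ Λ := by
  obtain ⟨b, hbi, hbeq⟩ := hL
  have h : ∀ i, ∃ a : Fin d → ℤ, w i = ∑ j, (a j : ℝ) • b j := by
    intro i
    have := hw i
    rw [hbeq] at this
    exact this
  choose a ha using h
  rw [hbeq]
  refine ⟨fun j => ∑ i, (c i : ℤ) * a i j, ?_⟩
  simp_rw [ha, Finset.smul_sum, smul_smul]
  rw [Finset.sum_comm]
  refine Finset.sum_congr rfl (fun j _ => ?_)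
  rw [← Finset.sum_smul]
  push_cast
  ring_nf

lemma conv_combo {d : ℕ} {K : Set (Euc d)} (hK : IsSymmConvexBody K)
    {u : Fin d → Euc d} (hu : ∀ i, u i ∈ K) {t : Fin d → ℝ}
    (ht : ∀ i, 0 ≤ t i) (hts : ∑ i, t i ≤ 1) :
    ∑ i, t i • u i ∈ K := by
  have := hK.2.1.sum_mem (t := (Finset.univ : Finset (Option (Fin d))))
    (w := fun o => Option.elim o (1 - ∑ i, t i) t)
    (z := fun o => Option.elim o 0 u)
    (fun o _ => by cases o with
      | none => simpa using hts
      | some i => exact ht i)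
    (by rw [Fintype.sum_option]; simp)
    (fun o _ => by cases o with
      | none => exact zero_mem_K hK
      | some i => exact hu i)
  rw [Fintype.sum_option] at this
  simpa using this

open Classical in
lemma flat_card {d k : ℕ} {w : Fin d → Euc d} (hwind : LinearIndependent ℝ w)
    {A : AffineSubspace ℝ (Euc d)} (hA : Module.finrank ℝ A.direction = k)
    (M : Fin d → ℕ) (M0 : ℕ) (hM : ∀ i, M i ≤ M0) :
    ((Fintype.piFinset fun i => Finset.range (M i + 1)).filter
      (fun c => ∑ i, (c i : ℝ) • w i ∈ A)).card ≤ (M0 + 1)^k := by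
  set flin : (Fin d → ℝ) →ₗ[ℝ] Euc d :=
    ∑ i, LinearMap.smulRight (LinearMap.proj i) (w i) with hflin
  have hflin_apply : ∀ z : Fin d → ℝ, flin z = ∑ i, z i • w i := by
    intro z
    rw [hflin]
    simp [LinearMap.sum_apply]
  have hflin_inj : Function.Injective flin := by
    rw [← LinearMap.ker_eq_bot, LinearMap.ker_eq_bot']
    intro z hz
    rw [hflin_apply] at hz
    exact funext (Fintype.linearIndependent_iff.1 hwind z hz)
  set W : Submodule ℝ (Fin d → ℝ) := A.direction.comap flin with hW
  have hWk : Module.finrank ℝ W ≤ k := by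
    rw [← hA]
    refine LinearMap.finrank_le_finrank_of_injective
      (f := (flin.domRestrict W).codRestrict A.direction (fun z => z.2)) ?_
    intro z₁ z₂ h
    have : flin z₁ = flin z₂ := congrArg Subtype.val h
    exact Subtype.ext (hflin_inj this)
  obtain ⟨J, hJcard, hJ⟩ := exists_coords k W hWk
  set g : (Fin d → ℕ) → (Fin d → ℕ) := fun x j => if j ∈ J then x j else 0 with hg
  have hBcard : (Fintype.piFinset fun j =>
      if j ∈ J then Finset.range (M0 + 1) else ({0} : Finset ℕ)).card ≤ (M0 + 1)^k := by
    rw [Fintype.card_piFinset]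
    have hcongr : ∏ j : Fin d, (if j ∈ J then Finset.range (M0 + 1) else ({0} : Finset ℕ)).card
        = ∏ j : Fin d, if j ∈ J then M0 + 1 else 1 :=
      Finset.prod_congr rfl fun j _ => by by_cases hj : j ∈ J <;> simp [hj]
    rw [hcongr]
    simp only [Finset.prod_ite_mem, Finset.univ_inter, Finset.prod_const]
    exact Nat.pow_le_pow_right (by omega) hJcard
  have hcard : ((Fintype.piFinset fun i => Finset.range (M i + 1)).filter
      (fun c => ∑ i, (c i : ℝ) • w i ∈ A)).card ≤ (Fintype.piFinset fun j =>
      if j ∈ J then Finset.range (M0 + 1) else ({0} : Finset ℕ)).card := by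
    apply Finset.card_le_card_of_injOn g
    · intro x hx
      rw [Finset.mem_coe, Finset.mem_filter] at hx
      rw [Finset.mem_coe, Fintype.mem_piFinset]
      intro j
      by_cases hj : j ∈ J
      · simp only [hg, hj, if_true]
        rw [Fintype.mem_piFinset] at *
        have := (hx.1 j)
        rw [Finset.mem_range] at this
        have : x j ≤ M0 := le_trans (Nat.lt_succ_iff.1 this) (hM j)
        simp [Finset.mem_range]
        omega
      · simp [hg, hj]
    · intro x hx y hy hxy
      rw [Finset.coe_filter, Set.mem_setOf_eq] at hx hy
      set z : Fin d → ℝ := fun i => (x i : ℝ) - (y i : ℝ) with hz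
      have hzW : z ∈ W := by
        rw [hW, Submodule.mem_comap]
        have h1 : flin z = (∑ i, (x i : ℝ) • w i) - ∑ i, (y i : ℝ) • w i := by
          rw [hflin_apply, ← Finset.sum_sub_distrib]
          exact Finset.sum_congr rfl fun i _ => (sub_smul _ _ _)
        rw [h1]
        have := AffineSubspace.vsub_mem_direction hx.2 hy.2
        simpa using this
      have hzJ : ∀ j ∈ J, z j = 0 := by
        intro j hj
        have : g x j = g y j := congrFun hxy j
        simp only [hg, hj, if_true] at this
        simp [hz, this]
      have hz0 := hJ z hzW hzJ
      funext i
      have hzi : (x i : ℝ) - (y i : ℝ) = 0 := by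
        have : z i = 0 := by rw [hz0]; rfl
        exact this
      have : (x i : ℝ) = y i := by linarith
      exact_mod_cast this
  exact le_trans hcard hBcard


theorem statement6 (d k : ℕ) (hk1 : 1 ≤ k) (hkd : k + 1 ≤ d) :
    ∃ c : ℝ, 0 < c ∧
      ∀ (Λ K : Set (Euc d)), IsLattice Λ → IsSymmConvexBody K →
        succMin Λ K d ≤ 1 →
        ∀ S : Finset (AffineSubspace ℝ (Euc d)),
          (∀ A ∈ S, (A : Set (Euc d)).Nonempty ∧ Module.finrank ℝ A.direction = k) →
          (∀ x ∈ Λ ∩ K, ∃ A ∈ S, x ∈ A) →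
          c * (∏ i ∈ Finset.Icc (k+1) d, succMin Λ K i)⁻¹ ≤ (S.card : ℝ) := by
  classical
  have hd0 : 0 < d := by omega
  have hdR : (0:ℝ) < (d:ℝ) := by exact_mod_cast hd0
  have hdR1 : (1:ℝ) ≤ (d:ℝ) := by exact_mod_cast hd0
  refine ⟨((d:ℝ)^d * 2^d)⁻¹ * (2/3)^k, by positivity, ?_⟩
  intro Λ K hL hK hlam1 S hSdim hcover
  set P : ℝ := ∏ i ∈ Finset.Icc (k+1) d, succMin Λ K i with hPdef
  have hPnonneg : 0 ≤ P := Finset.prod_nonneg fun i _ => succMin_nonneg Λ K i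
  by_cases hPpos : 0 < P
  swap
  · have hP0 : P = 0 := le_antisymm (not_lt.1 hPpos) hPnonneg
    rw [hP0, inv_zero, mul_zero]
    exact Nat.cast_nonneg _
  have hε : 0 < succMin Λ K (k+1) := by
    rcases eq_or_lt_of_le (succMin_nonneg Λ K (k+1)) with h | h
    · exfalso
      have : P = 0 := Finset.prod_eq_zero (Finset.mem_Icc.2 ⟨le_refl _, hkd⟩) h.symm
      rw [this] at hPpos
      exact lt_irrefl _ hPpos
    · exact h
  have hε1 : succMin Λ K (k+1) ≤ 1 :=
    le_trans (succMin_mono hL hK hkd (le_refl d)) hlam1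
  obtain ⟨w, hwind, hwmem⟩ := exists_w hL hK hkd hε d (le_refl d)
  set ε : ℝ := succMin Λ K (k+1) with hεdef
  set μ : Fin d → ℝ := fun i => succMin Λ K (max ((i:ℕ)+1) (k+1)) + ε with hμdef
  have hid : ∀ i : Fin d, (i:ℕ)+1 ≤ d := fun i => i.isLt
  have hεle : ∀ i : Fin d, ε ≤ succMin Λ K (max ((i:ℕ)+1) (k+1)) := fun i =>
    succMin_mono hL hK (le_max_right _ _) (max_le (hid i) hkd)
  have hμlb : ∀ i, 2*ε ≤ μ i := by
    intro i
    have h1 := hεle i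
    simp only [hμdef]
    linarith
  have hμpos : ∀ i, 0 < μ i := fun i => lt_of_lt_of_le (by linarith) (hμlb i)
  have hμub : ∀ i, μ i ≤ 2 * succMin Λ K (max ((i:ℕ)+1) (k+1)) := by
    intro i
    have h1 := hεle i
    simp only [hμdef]
    linarith
  set M : Fin d → ℕ := fun i => ⌊((d:ℝ) * μ i)⁻¹⌋₊ with hMdef
  set M0 : ℕ := ⌊((d:ℝ) * (2*ε))⁻¹⌋₊ with hM0def
  have hMM0 : ∀ i, M i ≤ M0 := by
    intro i
    apply Nat.floor_le_floor
    apply inv_anti₀ (by positivity)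
    exact mul_le_mul_of_nonneg_left (hμlb i) (le_of_lt hdR)
  have hM0ub : (M0:ℝ) + 1 ≤ 3/(2*ε) := by
    have h1 : (M0:ℝ) ≤ ((d:ℝ) * (2*ε))⁻¹ := Nat.floor_le (by positivity)
    have h2 : ((d:ℝ) * (2*ε))⁻¹ ≤ (2*ε)⁻¹ := by
      apply inv_anti₀ (by positivity)
      nlinarith
    have h3 : (1:ℝ) ≤ 2/(2*ε) := by
      rw [le_div_iff₀ (by positivity)]
      linarith
    have h4 : (2*ε)⁻¹ + 2/(2*ε) = 3/(2*ε) := by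
      field_simp
      ring
    linarith
  set Box : Finset (Fin d → ℕ) := Fintype.piFinset fun i => Finset.range (M i + 1) with hBoxdef
  have hBoxle : ∀ c ∈ Box, ∀ i, (c i) ≤ M i := by
    intro c hc i
    rw [hBoxdef, Fintype.mem_piFinset] at hc
    have := hc i
    rw [Finset.mem_range] at this
    omega
  have hBoxΛ : ∀ c ∈ Box, ∑ i, (c i : ℝ) • w i ∈ Λ :=
    fun c _ => lattice_combo hL (fun i => (hwmem i).1) c
  have hBoxK : ∀ c ∈ Box, ∑ i, (c i : ℝ) • w i ∈ K := by
    intro c hc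
    have hu : ∀ i, ∃ u, u ∈ K ∧ μ i • u = w i := by
      intro i
      exact (hwmem i).2
    choose u huK huw using hu
    have heq : ∑ i, (c i : ℝ) • w i = ∑ i, ((c i : ℝ) * μ i) • u i := by
      refine Finset.sum_congr rfl fun i _ => ?_
      rw [← huw i, smul_smul, mul_comm]
    rw [heq]
    apply conv_combo hK huK
    · intro i
      exact mul_nonneg (Nat.cast_nonneg _) (le_of_lt (hμpos i))
    · have hterm : ∀ i : Fin d, (c i : ℝ) * μ i ≤ (d:ℝ)⁻¹ := by
        intro i
        have h1 : (c i : ℝ) ≤ (M i : ℝ) := by exact_mod_cast hBoxle c hc i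
        have h2 : (M i : ℝ) ≤ ((d:ℝ) * μ i)⁻¹ :=
          Nat.floor_le (le_of_lt (inv_pos.2 (mul_pos hdR (hμpos i))))
        have h3 : ((d:ℝ) * μ i)⁻¹ * μ i = (d:ℝ)⁻¹ := by
          rw [mul_inv, mul_assoc, inv_mul_cancel₀ (ne_of_gt (hμpos i)), mul_one]
        calc (c i : ℝ) * μ i ≤ ((d:ℝ) * μ i)⁻¹ * μ i :=
              mul_le_mul_of_nonneg_right (le_trans h1 h2) (le_of_lt (hμpos i))
          _ = (d:ℝ)⁻¹ := h3
      calc ∑ i, (c i : ℝ) * μ i ≤ ∑ _i : Fin d, (d:ℝ)⁻¹ :=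
            Finset.sum_le_sum fun i _ => hterm i
        _ = (d:ℝ) * (d:ℝ)⁻¹ := by rw [Finset.sum_const]; simp [mul_comm]
        _ = 1 := mul_inv_cancel₀ (ne_of_gt hdR)
  have hsub : Box ⊆ S.biUnion fun A => Box.filter (fun c => ∑ i, (c i : ℝ) • w i ∈ A) := by
    intro c hc
    obtain ⟨A, hAS, hcA⟩ := hcover _ ⟨hBoxΛ c hc, hBoxK c hc⟩
    exact Finset.mem_biUnion.2 ⟨A, hAS, Finset.mem_filter.2 ⟨hc, hcA⟩⟩
  have hcount : Box.card ≤ S.card * (M0 + 1)^k := by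
    calc Box.card ≤ (S.biUnion fun A => Box.filter
          (fun c => ∑ i, (c i : ℝ) • w i ∈ A)).card := Finset.card_le_card hsub
      _ ≤ ∑ A ∈ S, (Box.filter (fun c => ∑ i, (c i : ℝ) • w i ∈ A)).card :=
          Finset.card_biUnion_le
      _ ≤ ∑ _A ∈ S, (M0 + 1)^k := by
          refine Finset.sum_le_sum fun A hA => ?_
          exact flat_card hwind (hSdim A hA).2 M M0 hMM0
      _ = S.card * (M0 + 1)^k := by rw [Finset.sum_const, smul_eq_mul]
  have hBoxcard : (Box.card : ℝ) = ∏ i : Fin d, ((M i : ℝ) + 1) := by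
    rw [hBoxdef, Fintype.card_piFinset]
    push_cast
    simp
  -- real arithmetic
  have h1 : ∏ i : Fin d, ((d:ℝ) * μ i)⁻¹ ≤ (S.card : ℝ) * ((M0:ℝ) + 1)^k := by
    calc ∏ i : Fin d, ((d:ℝ) * μ i)⁻¹ ≤ ∏ i : Fin d, ((M i : ℝ) + 1) := by
          refine Finset.prod_le_prod
            (fun i _ => le_of_lt (inv_pos.2 (mul_pos hdR (hμpos i)))) (fun i _ => ?_)
          exact le_of_lt (Nat.lt_floor_add_one _)
      _ = (Box.card : ℝ) := hBoxcard.symm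
      _ ≤ (S.card : ℝ) * ((M0:ℝ) + 1)^k := by exact_mod_cast hcount
  have hprodmax : ∏ i : Fin d, succMin Λ K (max ((i:ℕ)+1) (k+1)) = ε^k * P := by
    rw [Fin.prod_univ_eq_prod_range (fun i => succMin Λ K (max (i+1) (k+1))) d]
    rw [← Finset.prod_range_mul_prod_Ico _ (by omega : k ≤ d)]
    congr 1
    · rw [Finset.prod_congr rfl (fun i hi => ?_), Finset.prod_const, Finset.card_range]
      rw [Finset.mem_range] at hi
      rw [max_eq_right (by omega)]
    · rw [hPdef, ← Finset.Ico_add_one_right_eq_Icc, Finset.prod_Ico_eq_prod_range,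
        Finset.prod_Ico_eq_prod_range]
      refine Finset.prod_congr (by congr 1; omega) (fun i _ => ?_)
      rw [max_eq_left (by omega)]
      congr 1
      omega
  have h2 : ∏ i : Fin d, ((d:ℝ) * μ i) ≤ (d:ℝ)^d * (2^d * (ε^k * P)) := by
    rw [Finset.prod_mul_distrib, Finset.prod_const, Finset.card_univ, Fintype.card_fin]
    apply mul_le_mul_of_nonneg_left ?_ (by positivity)
    calc ∏ i : Fin d, μ i ≤ ∏ i : Fin d, 2 * succMin Λ K (max ((i:ℕ)+1) (k+1)) := by
          refine Finset.prod_le_prod (fun i _ => le_of_lt (hμpos i)) (fun i _ => hμub i)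
      _ = 2^d * (ε^k * P) := by
          rw [Finset.prod_mul_distrib, Finset.prod_const, Finset.card_univ, Fintype.card_fin,
            hprodmax]
  have hprodpos : 0 < ∏ i : Fin d, ((d:ℝ) * μ i) :=
    Finset.prod_pos fun i _ => mul_pos hdR (hμpos i)
  have h3 : ((d:ℝ)^d * (2^d * (ε^k * P)))⁻¹ ≤ ∏ i : Fin d, ((d:ℝ) * μ i)⁻¹ := by
    rw [Finset.prod_inv_distrib]
    exact inv_anti₀ hprodpos h2
  have hQ : ((d:ℝ)^d * (2^d * (ε^k * P)))⁻¹ ≤ (S.card : ℝ) * ((M0:ℝ) + 1)^k :=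
    le_trans h3 h1
  -- final
  have hBpos : (0:ℝ) < ((M0:ℝ) + 1)^k := by positivity
  have hdiv : ((d:ℝ)^d * (2^d * (ε^k * P)))⁻¹ / ((M0:ℝ) + 1)^k ≤ (S.card : ℝ) :=
    (div_le_iff₀ hBpos).2 hQ
  have h5 : (2*ε/3)^k ≤ (((M0:ℝ) + 1)^k)⁻¹ := by
    rw [← inv_pow]
    apply pow_le_pow_left₀ (by positivity)
    rw [show (2*ε/3 : ℝ) = (3/(2*ε))⁻¹ by rw [inv_div]]
    exact inv_anti₀ (by positivity) hM0ub
  have h6 : ((d:ℝ)^d * (2^d * (ε^k * P)))⁻¹ * (2*ε/3)^k ≤ (S.card : ℝ) := by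
    refine le_trans ?_ hdiv
    rw [div_eq_mul_inv]
    exact mul_le_mul_of_nonneg_left h5 (by positivity)
  have heq : ((d:ℝ)^d * 2^d)⁻¹ * (2/3)^k * P⁻¹
      = ((d:ℝ)^d * (2^d * (ε^k * P)))⁻¹ * (2*ε/3)^k := by
    rw [div_pow, div_pow, mul_pow]
    field_simp
  rw [heq]
  exact h6
end
end

section
/- Let d and k be integers with 1 ≤ k ≤ d−1, let Λ be a d-dimensional lattice in ℝ^d, and set λ_i := λ_i(Λ,B^d) for i = 1,…,d. Let α := min_{d−k+1 ≤ i ≤ d} (λ_{d−i+1}·λ_{d−i+2}·⋯·λ_d)^{−1/(i−1)} and let q ∈ {d−k+1,…,d} be an index attaining this minimum, i.e., α = (λ_{d−q+1}·⋯·λ_d)^{−1/(q−1)}. If q ≥ d−k+2, then for every i ∈ {3,…,d−k+2} we have (λ_{d−i+2}·λ_{d−i+3}·⋯·λ_d)^{(q−i+1)/(i−2)} ≤ λ_{d−q+1}·λ_{d−q+2}·⋯·λ_{d−i+1}. -/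
open scoped BigOperators Pointwise
open Metric

noncomputable section

private lemma rpow_cmp14 (x y : ℝ) (hx : 0 < x) (hy : 0 < y) {a b : ℕ} (ha : 2 ≤ a) (hb : 2 ≤ b) :
    x ^ (-(1:ℝ)/((a:ℝ)-1)) ≤ y ^ (-(1:ℝ)/((b:ℝ)-1)) ↔ y ^ (a-1) ≤ x ^ (b-1) := by
  have haR : (2:ℝ) ≤ (a:ℝ) := by exact_mod_cast ha
  have hbR : (2:ℝ) ≤ (b:ℝ) := by exact_mod_cast hb
  have hA : (0:ℝ) < (a:ℝ) - 1 := by linarith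
  have hB : (0:ℝ) < (b:ℝ) - 1 := by linarith
  have hca : ((a - 1 : ℕ) : ℝ) = (a:ℝ) - 1 := by
    have h1 : 1 ≤ a := by omega
    push_cast [h1]; ring
  have hcb : ((b - 1 : ℕ) : ℝ) = (b:ℝ) - 1 := by
    have h1 : 1 ≤ b := by omega
    push_cast [h1]; ring
  rw [← Real.log_le_log_iff (Real.rpow_pos_of_pos hx _) (Real.rpow_pos_of_pos hy _),
      Real.log_rpow hx, Real.log_rpow hy,
      ← Real.log_le_log_iff (pow_pos hy _) (pow_pos hx _),
      Real.log_pow, Real.log_pow, hca, hcb,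
      div_mul_eq_mul_div, div_mul_eq_mul_div, div_le_div_iff₀ hA hB]
  constructor <;> intro h <;> nlinarith [h]

-- discreteness of a lattice
private lemma lattice_eps {d : ℕ} (hd : 1 ≤ d) (b : Fin d → Euc d)
    (hb : LinearIndependent ℝ b) :
    ∃ ε : ℝ, 0 < ε ∧ ∀ c : Fin d → ℤ, c ≠ 0 → ε ≤ ‖∑ i, (c i : ℝ) • b i‖ := by
  haveI : Nonempty (Fin d) := ⟨⟨0, by omega⟩⟩
  have hcard : Fintype.card (Fin d) = Module.finrank ℝ (Euc d) := by
    simp [finrank_euclideanSpace]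
  let B : Module.Basis (Fin d) ℝ (Euc d) := basisOfLinearIndependentOfCardEqFinrank hb hcard
  have hBb : ∀ i, B i = b i := by
    intro i
    simp [B, coe_basisOfLinearIndependentOfCardEqFinrank]
  let f : Euc d →L[ℝ] (Fin d → ℝ) :=
    LinearMap.toContinuousLinearMap (B.equivFun : Euc d →ₗ[ℝ] (Fin d → ℝ))
  set C : ℝ := max ‖f‖ 1 with hC
  have hCpos : 0 < C := lt_of_lt_of_le one_pos (le_max_right _ _)
  refine ⟨C⁻¹, by positivity, ?_⟩
  intro c hc
  set x : Euc d := ∑ i, (c i : ℝ) • b i with hxdef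
  have hx : x = B.equivFun.symm (fun i => (c i : ℝ)) := by
    rw [Module.Basis.equivFun_symm_apply]
    simp only [hBb, hxdef]
  have hfx : B.equivFun x = fun i => (c i : ℝ) := by
    rw [hx]; exact B.equivFun.apply_symm_apply _
  obtain ⟨i0, hi0⟩ : ∃ i, c i ≠ 0 := by
    by_contra h
    push_neg at h
    exact hc (funext fun i => by simpa using h i)
  have h1 : (1:ℝ) ≤ ‖(fun i => (c i : ℝ)) i0‖ := by
    simp only [Real.norm_eq_abs]
    exact_mod_cast Int.one_le_abs hi0
  have h2 : ‖(fun i => (c i : ℝ)) i0‖ ≤ ‖B.equivFun x‖ := by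
    rw [hfx]; exact norm_le_pi_norm (fun i => ((c i : ℤ) : ℝ)) i0
  have h3 : ‖B.equivFun x‖ ≤ C * ‖x‖ := by
    calc ‖B.equivFun x‖ = ‖f x‖ := rfl
    _ ≤ ‖f‖ * ‖x‖ := f.le_opNorm x
    _ ≤ C * ‖x‖ := by
        apply mul_le_mul_of_nonneg_right (le_max_left _ _) (norm_nonneg _)
  have h4 : (1:ℝ) ≤ C * ‖x‖ := le_trans h1 (le_trans h2 h3)
  calc C⁻¹ = C⁻¹ * 1 := (mul_one _).symm
  _ ≤ C⁻¹ * (C * ‖x‖) := mul_le_mul_of_nonneg_left h4 (by positivity)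
  _ = ‖x‖ := by field_simp


theorem statement14 (d k : ℕ) (hk1 : 1 ≤ k) (hkd : k + 1 ≤ d)
    (Λ : Set (Euc d)) (hΛ : IsLattice Λ)
    (q : ℕ) (hq1 : d - k + 1 ≤ q) (hq2 : q ≤ d) (hq3 : d - k + 2 ≤ q)
    (α : ℝ)
    (hmin : α = (Finset.Icc (d - k + 1) d).inf' (Finset.nonempty_Icc.mpr (by omega))
      (fun i => (∏ j ∈ Finset.Icc (d - i + 1) d, succMin Λ (unitBall d) j)
        ^ (-(1:ℝ)/((i:ℝ)-1))))
    (hattain : α = (∏ j ∈ Finset.Icc (d - q + 1) d, succMin Λ (unitBall d) j)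
        ^ (-(1:ℝ)/((q:ℝ)-1))) :
    ∀ i ∈ Finset.Icc 3 (d - k + 2),
      (∏ j ∈ Finset.Icc (d - i + 2) d, succMin Λ (unitBall d) j)
          ^ (((q:ℝ)-(i:ℝ)+1)/((i:ℝ)-2)) ≤
        ∏ j ∈ Finset.Icc (d - q + 1) (d - i + 1), succMin Λ (unitBall d) j := by
  classical
  obtain ⟨b, hb, hΛeq⟩ := hΛ
  have hd : 1 ≤ d := by omega
  set L : ℕ → ℝ := succMin Λ (unitBall d) with hLdef
  set S : ℕ → Set ℝ := fun i => {r : ℝ | 0 < r ∧ ∃ v : Fin i → Euc d,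
    LinearIndependent ℝ v ∧ ∀ j, v j ∈ Λ ∧ v j ∈ r • (unitBall d)} with hSdef
  have hLS : ∀ i, L i = sInf (S i) := fun i => rfl
  have hbΛ : ∀ j, b j ∈ Λ := by
    intro j
    rw [hΛeq]
    refine ⟨fun t => if t = j then 1 else 0, ?_⟩
    simp
  -- nonemptiness of the defining sets
  have hSne : ∀ i, i ≤ d → (S i).Nonempty := by
    intro i hi
    set r : ℝ := 1 + ∑ j, ‖b j‖ with hr
    have hrpos : 0 < r := by positivity
    refine ⟨r, hrpos, b ∘ Fin.castLE hi,
      hb.comp _ (Fin.castLE_injective hi), fun j => ⟨hbΛ _, ?_⟩⟩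
    refine ⟨r⁻¹ • b (Fin.castLE hi j), ?_, ?_⟩
    · rw [unitBall, mem_closedBall_zero_iff, norm_smul, norm_inv, Real.norm_of_nonneg hrpos.le]
      have hle : ‖b (Fin.castLE hi j)‖ ≤ r := by
        rw [hr]
        have := Finset.single_le_sum (f := fun t => ‖b t‖)
          (fun t _ => norm_nonneg (b t)) (Finset.mem_univ (Fin.castLE hi j))
        linarith
      calc r⁻¹ * ‖b (Fin.castLE hi j)‖ ≤ r⁻¹ * r :=
            mul_le_mul_of_nonneg_left hle (by positivity)
        _ = 1 := inv_mul_cancel₀ hrpos.ne'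
    · simp [smul_smul, mul_inv_cancel₀ hrpos.ne']
  -- lower bound on nonzero lattice vectors
  obtain ⟨ε, hεpos, hε⟩ := lattice_eps hd b hb
  have hεΛ : ∀ x ∈ Λ, x ≠ 0 → ε ≤ ‖x‖ := by
    intro x hx hx0
    rw [hΛeq] at hx
    obtain ⟨c, rfl⟩ := hx
    refine hε c ?_
    rintro rfl
    simp at hx0
  -- positivity
  have hLlow : ∀ i, 1 ≤ i → i ≤ d → ε ≤ L i := by
    intro i h1 h2
    rw [hLS]
    refine le_csInf (hSne i h2) ?_
    rintro r ⟨hrpos, v, hv, hvm⟩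
    have j0 : Fin i := ⟨0, by omega⟩
    have hne : v j0 ≠ 0 := hv.ne_zero j0
    obtain ⟨y, hy, hyx⟩ := (hvm j0).2
    rw [unitBall, mem_closedBall_zero_iff] at hy
    have : ‖v j0‖ ≤ r := by
      rw [← hyx, norm_smul, Real.norm_of_nonneg hrpos.le]
      calc r * ‖y‖ ≤ r * 1 := mul_le_mul_of_nonneg_left hy hrpos.le
        _ = r := mul_one r
    exact le_trans (hεΛ _ (hvm j0).1 hne) this
  have hLpos : ∀ i, 1 ≤ i → i ≤ d → 0 < L i :=
    fun i h1 h2 => lt_of_lt_of_le hεpos (hLlow i h1 h2)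
  -- monotonicity
  have hLmono : ∀ i j, i ≤ j → j ≤ d → L i ≤ L j := by
    intro i j hij hjd
    rw [hLS, hLS]
    refine csInf_le_csInf ⟨0, fun r hr => hr.1.le⟩ (hSne j hjd) ?_
    rintro r ⟨hrpos, v, hv, hvm⟩
    exact ⟨hrpos, v ∘ Fin.castLE hij, hv.comp _ (Fin.castLE_injective hij),
      fun t => hvm _⟩
  -- products
  set P : ℕ → ℝ := fun m => ∏ j ∈ Finset.Icc (d - m + 1) d, L j with hPdef
  have hPpos : ∀ m, m ≤ d → 0 < P m := by
    intro m hm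
    refine Finset.prod_pos ?_
    intro j hj
    rw [Finset.mem_Icc] at hj
    exact hLpos j (by omega) hj.2
  -- splitting
  have hsplit : ∀ m, 1 ≤ m → m ≤ d → P m = L (d - m + 1) * P (m - 1) := by
    intro m h1 h2
    have e1 : Finset.Icc (d - m + 1) d = Finset.Ioc (d - m) d := Finset.Icc_add_one_left_eq_Ioc ..
    have e2 : Finset.Icc (d - (m-1) + 1) d = Finset.Ioc (d - m + 1) d := by
      have : d - (m - 1) = d - m + 1 := by omega
      rw [this]; exact Finset.Icc_add_one_left_eq_Ioc ..
    rw [hPdef]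
    simp only [e1, e2]
    rw [← Finset.prod_Ioc_consecutive (fun j => L j) (Nat.le_succ (d - m)) (by omega),
        Nat.Ioc_succ_singleton, Finset.prod_singleton]
  -- key comparison from the minimality of q
  have h2q : 3 ≤ q := by omega
  have hcomp : ∀ m, d - k + 1 ≤ m → m ≤ d → P m ^ (q - 1) ≤ P q ^ (m - 1) := by
    intro m hm1 hm2
    have hmem : m ∈ Finset.Icc (d - k + 1) d := Finset.mem_Icc.mpr ⟨hm1, hm2⟩
    have h1 : α ≤ P m ^ (-(1:ℝ)/((m:ℝ)-1)) := by
      rw [hmin]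
      exact Finset.inf'_le _ hmem
    rw [hattain] at h1
    exact (rpow_cmp14 (P q) (P m) (hPpos q hq2) (hPpos m hm2)
      (by omega) (by omega)).mp h1
  -- step: P q ≤ L j ^ (q-1) for j ≥ d - q + 1
  have hPqL : ∀ j, d - q + 1 ≤ j → j ≤ d → P q ≤ L j ^ (q - 1) := by
    have hs : P q = L (d - q + 1) * P (q - 1) := hsplit q (by omega) hq2
    have hc := hcomp (q - 1) (by omega) (by omega)
    have hq11 : q - 1 - 1 = q - 2 := by omega
    rw [hq11, hs] at hc
    have hA : 0 < P (q - 1) := hPpos _ (by omega)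
    have hL1 : 0 < L (d - q + 1) := hLpos _ (by omega) (by omega)
    have hPA : P (q - 1) ≤ L (d - q + 1) ^ (q - 2) := by
      have e : P (q-1) ^ (q-1) = P (q-1) * P (q-1) ^ (q - 2) := by
        rw [← pow_succ']
        congr 1
        omega
      have e2 : (L (d-q+1) * P (q-1)) ^ (q-2)
          = L (d-q+1) ^ (q-2) * P (q-1) ^ (q-2) := mul_pow _ _ _
      rw [e, e2] at hc
      exact le_of_mul_le_mul_right (by
        calc P (q-1) * P (q-1) ^ (q-2) ≤ L (d-q+1) ^ (q-2) * P (q-1) ^ (q-2) := hc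
        ) (pow_pos hA _)
    have hbase : P q ≤ L (d - q + 1) ^ (q - 1) := by
      rw [hs]
      calc L (d-q+1) * P (q-1) ≤ L (d-q+1) * L (d-q+1) ^ (q-2) :=
            mul_le_mul_of_nonneg_left hPA hL1.le
        _ = L (d-q+1) ^ (q-1) := by
            rw [← pow_succ']
            congr 1
            omega
    intro j hj1 hj2
    refine le_trans hbase (pow_le_pow_left₀ hL1.le (hLmono _ _ hj1 hj2) _)
  -- downward induction
  have hkey : ∀ t m, m + t = d - k + 1 → 2 ≤ m → P m ^ (q - 1) ≤ P q ^ (m - 1) := by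
    intro t
    induction t with
    | zero =>
      intro m hm h2
      exact hcomp m (by omega) (by omega)
    | succ t ih =>
      intro m hm h2
      have IH := ih (m + 1) (by omega) (by omega)
      have hmd : m + 1 ≤ d := by omega
      have hs : P (m + 1) = L (d - m) * P m := by
        have := hsplit (m + 1) (by omega) hmd
        have e : d - (m+1) + 1 = d - m := by omega
        rw [e] at this
        simpa using this
      have hLm : 0 < L (d - m) := hLpos _ (by omega) (by omega)
      have hPq := hPqL (d - m) (by omega) (by omega)
      have e1 : P (m+1) ^ (q-1) = L (d-m) ^ (q-1) * P m ^ (q-1) := by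
        rw [hs, mul_pow]
      have e2 : P q ^ (m + 1 - 1) = P q ^ (m - 1) * P q := by
        rw [← pow_succ]
        congr 1
        omega
      rw [e1, e2] at IH
      have h3 : L (d-m) ^ (q-1) * P m ^ (q-1)
          ≤ P q ^ (m-1) * L (d-m) ^ (q-1) := by
        calc L (d-m) ^ (q-1) * P m ^ (q-1) ≤ P q ^ (m-1) * P q := IH
          _ ≤ P q ^ (m-1) * L (d-m) ^ (q-1) :=
            mul_le_mul_of_nonneg_left hPq (pow_nonneg (hPpos q hq2).le _)
      have h4 : P m ^ (q-1) * L (d-m) ^ (q-1)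
          ≤ P q ^ (m-1) * L (d-m) ^ (q-1) := by
        calc P m ^ (q-1) * L (d-m) ^ (q-1) = L (d-m) ^ (q-1) * P m ^ (q-1) := by ring
          _ ≤ P q ^ (m-1) * L (d-m) ^ (q-1) := h3
      exact le_of_mul_le_mul_right h4 (pow_pos hLm _)
  -- conclusion
  intro i hi
  rw [Finset.mem_Icc] at hi
  obtain ⟨hi3, hi2⟩ := hi
  have hiq : i ≤ q := by omega
  have hkeyi := hkey (d - k + 1 - (i - 1)) (i - 1) (by omega) (by omega)
  have ei : i - 1 - 1 = i - 2 := by omega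
  rw [ei] at hkeyi
  -- identify the target product with P (i-1)
  have eP : (∏ j ∈ Finset.Icc (d - i + 2) d, L j) = P (i - 1) := by
    rw [hPdef]
    congr 1
    have : d - (i - 1) + 1 = d - i + 2 := by omega
    rw [this]
  set Q : ℝ := ∏ j ∈ Finset.Icc (d - q + 1) (d - i + 1), L j with hQdef
  have hQpos : 0 < Q := by
    refine Finset.prod_pos ?_
    intro j hj
    rw [Finset.mem_Icc] at hj
    exact hLpos j (by omega) (by omega)
  have hsplitQ : P q = Q * P (i - 1) := by
    rw [hPdef, hQdef]
    have e1 : Finset.Icc (d - q + 1) d = Finset.Ioc (d - q) d := Finset.Icc_add_one_left_eq_Ioc ..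
    have e2 : Finset.Icc (d - q + 1) (d - i + 1) = Finset.Ioc (d - q) (d - i + 1) :=
      Finset.Icc_add_one_left_eq_Ioc ..
    have e3 : Finset.Icc (d - (i-1) + 1) d = Finset.Ioc (d - i + 1) d := by
      have : d - (i - 1) + 1 = (d - i + 1) + 1 := by omega
      rw [this]; exact Finset.Icc_add_one_left_eq_Ioc ..
    simp only [e1, e2, e3]
    rw [← Finset.prod_Ioc_consecutive (fun j => L j) (by omega : d - q ≤ d - i + 1)
      (by omega : d - i + 1 ≤ d)]
  -- derive the power inequality
  have hPi : 0 < P (i - 1) := hPpos _ (by omega)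
  have hfin : P (i - 1) ^ (q - i + 1) ≤ Q ^ (i - 2) := by
    have e1 : P (i-1) ^ (q-1) = P (i-1) ^ (q-i+1) * P (i-1) ^ (i-2) := by
      rw [← pow_add]
      congr 1
      omega
    have e2 : P q ^ (i-2) = Q ^ (i-2) * P (i-1) ^ (i-2) := by
      rw [hsplitQ, mul_pow]
    rw [e1, e2] at hkeyi
    exact le_of_mul_le_mul_right hkeyi (pow_pos hPi _)
  -- convert to rpow
  rw [eP]
  have ec1 : ((q:ℝ) - (i:ℝ) + 1) = ((q - i + 1 : ℕ) : ℝ) := by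
    have : i ≤ q := hiq
    push_cast [this]
    ring
  have ec2 : ((i:ℝ) - 2) = ((i - 2 : ℕ) : ℝ) := by
    have h2i : 2 ≤ i := by omega
    push_cast [h2i]
    ring
  rw [ec1, ec2, div_eq_mul_inv, Real.rpow_mul hPi.le, Real.rpow_natCast]
  rw [Real.rpow_inv_le_iff_of_pos (pow_nonneg hPi.le _) hQpos.le
    (by exact_mod_cast (by omega : 0 < i - 2))]
  rw [Real.rpow_natCast]
  exact hfin
end
end

section
/- Let d and k be integers with 2 ≤ k ≤ d−2 and let ε ∈ (0,1). There is a positive integer p_0 = p_0(d,ε,k) such that for every prime number p ≥ p_0 there exists a subset R of 𝔽_p^{d−1} of size at least p^{d−k−ε}/2 such that every (k−1)-dimensional affine subspace of 𝔽_p^{d−1} contains at most r−1 points of R, where r := ⌈k(d−k+1)/ε⌉. -/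
open scoped BigOperators Pointwise
open Metric

noncomputable section

open Module

-- card of a finite affine subspace with small direction
lemma aux_card_affine_le {K V : Type*} [Field K] [Fintype K] [AddCommGroup V] [Module K V]
    [Fintype V] (A : AffineSubspace K V) (m : ℕ)
    (h : Module.finrank K A.direction ≤ m) :
    (A : Set V).ncard ≤ Fintype.card K ^ m := by
  classical
  rcases (A : Set V).eq_empty_or_nonempty with he | ⟨a, ha⟩
  · simp [he]
  · have himg : (A.direction : Set V) = (· -ᵥ a) '' (A : Set V) :=
      AffineSubspace.coe_direction_eq_vsub_set_right ha
    have hinj : Function.Injective (· -ᵥ a : V → V) := fun x y hxy => by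
      simpa [vsub_eq_sub, sub_left_injective.eq_iff] using hxy
    have hcard : (A : Set V).ncard = (A.direction : Set V).ncard := by
      rw [himg, Set.ncard_image_of_injective _ hinj]
    rw [hcard]
    haveI : Fintype A.direction := Fintype.ofFinite _
    have : (A.direction : Set V).ncard = Fintype.card A.direction := by
      rw [← Nat.card_coe_set_eq, Nat.card_eq_fintype_card]
      rfl
    rw [this, card_eq_pow_finrank (K := K) (V := A.direction)]
    exact Nat.pow_le_pow_right Fintype.card_pos h

-- shrink a spanning finset
lemma aux_exists_small_spanning {K V : Type*} [Field K] [AddCommGroup V] [Module K V]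
    (T : Finset V) (kk : ℕ) (hk : 1 ≤ kk) (hcard : kk ≤ T.card)
    (hdim : Module.finrank K (affineSpan K (T : Set V)).direction ≤ kk - 1) :
    ∃ S : Finset V, S ⊆ T ∧ S.card = kk ∧ (T : Set V) ⊆ affineSpan K (S : Set V) := by
  classical
  obtain ⟨t, hts, hspan, hind⟩ := exists_affineIndependent K V (T : Set V)
  have htfin : t.Finite := T.finite_toSet.subset hts
  set S₀ : Finset V := htfin.toFinset with hS₀
  have hS₀T : S₀ ⊆ T := by
    intro x hx
    have : x ∈ t := by simpa [hS₀] using hx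
    exact_mod_cast hts this
  have hS₀card : S₀.card ≤ kk := by
    rcases t.eq_empty_or_nonempty with hte | htne
    · simp [hS₀, hte]
    · haveI := htfin.fintype
      haveI : Nonempty t := htne.to_subtype
      have hrange : Set.range ((↑) : t → V) = t := Subtype.range_coe
      have hfr : finrank K (vectorSpan K (Set.range ((↑) : t → V))) + 1 = Fintype.card t :=
        hind.finrank_vectorSpan_add_one
      rw [hrange] at hfr
      have hvs : vectorSpan K t = (affineSpan K (T : Set V)).direction := by
        rw [← direction_affineSpan, hspan]
      have hcard₀ : S₀.card = Fintype.card t := by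
        simp [hS₀, Set.Finite.card_toFinset]
      rw [hcard₀, ← hfr, hvs]
      omega
  obtain ⟨S, hS₀S, hST, hScard⟩ := Finset.exists_subsuperset_card_eq hS₀T hS₀card hcard
  refine ⟨S, hST, hScard, ?_⟩
  intro x hx
  have h1 : x ∈ affineSpan K (T : Set V) := subset_affineSpan K _ hx
  rw [← hspan] at h1
  have h2 : affineSpan K t ≤ affineSpan K (S : Set V) := by
    apply affineSpan_mono
    intro y hy
    have : y ∈ S₀ := by simpa [hS₀] using hy
    exact_mod_cast hS₀S this
  exact h2 h1

open Module Finset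

-- enumeration helper
lemma aux_range_listfun {V : Type*} [Inhabited V] (S : Finset V) (m : ℕ) (hm : S.card = m) :
    Set.range (fun i : Fin m => S.toList.getD i default) = (S : Set V) := by
  have hlen : S.toList.length = m := by rw [Finset.length_toList, hm]
  ext x
  constructor
  · rintro ⟨i, rfl⟩
    have hi : (i : ℕ) < S.toList.length := by omega
    simp only [List.getD_eq_getElem _ _ hi]
    exact_mod_cast Finset.mem_toList.mp (List.getElem_mem hi)
  · intro hx
    have : x ∈ S.toList := Finset.mem_toList.mpr hx
    obtain ⟨j, hj, hx⟩ := List.mem_iff_getElem.mp this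
    refine ⟨⟨j, by omega⟩, ?_⟩
    show S.toList.getD j default = x
    rw [List.getD_eq_getElem _ _ hj]
    exact hx

lemma aux_image_listfun {V : Type*} [Inhabited V] [DecidableEq V] (S : Finset V) (m : ℕ)
    (hm : S.card = m) :
    Finset.image (fun i : Fin m => S.toList.getD i default) Finset.univ = S := by
  have := aux_range_listfun S m hm
  ext x
  simp only [Finset.mem_image, Finset.mem_univ, true_and]
  rw [← Finset.mem_coe, ← this]
  constructor
  · rintro ⟨i, rfl⟩; exact ⟨i, rfl⟩
  · rintro ⟨i, rfl⟩; exact ⟨i, rfl⟩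

lemma aux_bad_count {K V : Type*} [Field K] [Fintype K] [AddCommGroup V] [Module K V]
    [Fintype V] [DecidableEq V] (kk rr : ℕ) (hk : 1 ≤ kk) (hkr : kk ≤ rr)
    (Bad : Finset (Finset V))
    (hBad : ∀ T ∈ Bad, T.card = rr ∧
      Module.finrank K (affineSpan K (T : Set V)).direction ≤ kk - 1) :
    Bad.card ≤ Fintype.card V ^ kk * (Fintype.card K ^ (kk - 1)) ^ (rr - kk) := by
  classical
  haveI : Inhabited V := ⟨0⟩
  set tgt : Finset ((Fin kk → V) × (Fin (rr - kk) → V)) :=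
    Finset.univ.filter (fun fg => ∀ j, fg.2 j ∈ affineSpan K (Set.range fg.1)) with htgt
  -- the choice of spanning subset
  set P : Finset V → Prop := fun T =>
    ∃ S : Finset V, S ⊆ T ∧ S.card = kk ∧ (T : Set V) ⊆ affineSpan K (S : Set V) with hP
  set cS : Finset V → Finset V := fun T => if h : P T then h.choose else ∅ with hcS
  set F : Finset V → (Fin kk → V) × (Fin (rr - kk) → V) := fun T =>
    ((fun i : Fin kk => (cS T).toList.getD i default),
     (fun j : Fin (rr - kk) => (T \ cS T).toList.getD j default)) with hF
  have key : ∀ T ∈ Bad, (cS T ⊆ T ∧ (cS T).card = kk ∧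
      (T : Set V) ⊆ affineSpan K ((cS T : Set V)) ∧ (T \ cS T).card = rr - kk) := by
    intro T hT
    obtain ⟨hTr, hdim⟩ := hBad T hT
    have hPT : P T := by
      rw [hP]
      exact aux_exists_small_spanning T kk hk (by omega) hdim
    obtain ⟨h1, h2, h3⟩ := hPT.choose_spec
    have hcsT : cS T = hPT.choose := by rw [hcS]; simp [hPT]
    rw [hcsT]
    exact ⟨h1, h2, h3, by rw [Finset.card_sdiff_of_subset h1, hTr, h2]⟩
  have hle : Bad.card ≤ tgt.card := by
    apply Finset.card_le_card_of_injOn F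
    · intro T hT
      obtain ⟨hsub, hcard, hspan, hdcard⟩ := key T hT
      rw [htgt]
      simp only [Finset.mem_coe, Finset.mem_filter, Finset.mem_univ, true_and]
      intro j
      rw [aux_range_listfun (cS T) kk hcard]
      apply hspan
      have hj : (j : ℕ) < (T \ cS T).toList.length := by
        rw [Finset.length_toList, hdcard]; omega
      show (T \ cS T).toList.getD j default ∈ (T : Set V)
      rw [List.getD_eq_getElem _ _ hj]
      have := Finset.mem_toList.mp (List.getElem_mem hj)
      exact Finset.mem_coe.mpr (Finset.sdiff_subset this)
    · intro T hT T' hT' hFF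
      obtain ⟨hsub, hcard, _, hdcard⟩ := key T hT
      obtain ⟨hsub', hcard', _, hdcard'⟩ := key T' hT'
      have h1 : Finset.image (fun i : Fin kk => (cS T).toList.getD i default) Finset.univ
          ∪ Finset.image (fun j : Fin (rr-kk) => (T \ cS T).toList.getD j default) Finset.univ
          = T := by
        rw [aux_image_listfun _ _ hcard, aux_image_listfun _ _ hdcard,
          Finset.union_sdiff_of_subset hsub]
      have h1' : Finset.image (fun i : Fin kk => (cS T').toList.getD i default) Finset.univ
          ∪ Finset.image (fun j : Fin (rr-kk) => (T' \ cS T').toList.getD j default) Finset.univ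
          = T' := by
        rw [aux_image_listfun _ _ hcard', aux_image_listfun _ _ hdcard',
          Finset.union_sdiff_of_subset hsub']
      have e1 : (fun i : Fin kk => (cS T).toList.getD i default)
          = (fun i : Fin kk => (cS T').toList.getD i default) := congrArg Prod.fst hFF
      have e2 : (fun j : Fin (rr-kk) => (T \ cS T).toList.getD j default)
          = (fun j : Fin (rr-kk) => (T' \ cS T').toList.getD j default) := congrArg Prod.snd hFF
      rw [← h1, ← h1', e1, e2]
  -- bound tgt.card
  have htgtcard : tgt.card ≤ Fintype.card V ^ kk * (Fintype.card K ^ (kk - 1)) ^ (rr - kk) := by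
    have hfib : tgt.card = ∑ f ∈ (Finset.univ : Finset (Fin kk → V)),
        (tgt.filter (fun fg => fg.1 = f)).card :=
      Finset.card_eq_sum_card_fiberwise (fun x _ => Finset.mem_univ x.1)
    rw [hfib]
    have hbound : ∀ f : Fin kk → V,
        (tgt.filter (fun fg => fg.1 = f)).card ≤ (Fintype.card K ^ (kk - 1)) ^ (rr - kk) := by
      intro f
      have hdim : Module.finrank K (affineSpan K (Set.range f)).direction ≤ kk - 1 := by
        rw [direction_affineSpan]
        exact finrank_vectorSpan_range_le K f (by simp; omega)
      have hm : (Finset.univ.filter (· ∈ affineSpan K (Set.range f))).card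
          ≤ Fintype.card K ^ (kk - 1) := by
        have : (Finset.univ.filter (· ∈ affineSpan K (Set.range f))).card
            = ((affineSpan K (Set.range f) : Set V)).ncard := by
          rw [← Fintype.card_subtype, ← Nat.card_eq_fintype_card]
          exact Nat.card_coe_set_eq _
        rw [this]
        exact aux_card_affine_le _ _ hdim
      calc (tgt.filter (fun fg => fg.1 = f)).card
          ≤ (Fintype.piFinset (fun _ : Fin (rr - kk) =>
              Finset.univ.filter (· ∈ affineSpan K (Set.range f)))).card := by
            apply Finset.card_le_card_of_injOn (fun fg => fg.2)
            · intro fg hfg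
              rw [htgt] at hfg
              simp only [Finset.mem_coe, Finset.mem_filter, Finset.mem_univ, true_and] at hfg
              rw [Finset.mem_coe, Fintype.mem_piFinset]
              intro j
              simp only [Finset.mem_filter, Finset.mem_univ, true_and]
              rw [← hfg.2]
              exact hfg.1 j
            · intro a ha b hb hab
              simp only [Finset.mem_coe, Finset.mem_filter] at ha hb
              exact Prod.ext (ha.2.trans hb.2.symm) hab
        _ ≤ (Fintype.card K ^ (kk - 1)) ^ (rr - kk) := by
            rw [Fintype.card_piFinset]
            calc ∏ _j : Fin (rr - kk), (Finset.univ.filter (· ∈ affineSpan K (Set.range f))).card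
                ≤ ∏ _j : Fin (rr - kk), Fintype.card K ^ (kk - 1) :=
                  Finset.prod_le_prod (fun _ _ => Nat.zero_le _) (fun _ _ => hm)
              _ = (Fintype.card K ^ (kk - 1)) ^ (rr - kk) := by
                  rw [Finset.prod_const]; simp
    calc ∑ f ∈ (Finset.univ : Finset (Fin kk → V)), (tgt.filter (fun fg => fg.1 = f)).card
        ≤ ∑ _f ∈ (Finset.univ : Finset (Fin kk → V)), (Fintype.card K ^ (kk - 1)) ^ (rr - kk) :=
          Finset.sum_le_sum (fun f _ => hbound f)
      _ = Fintype.card V ^ kk * (Fintype.card K ^ (kk - 1)) ^ (rr - kk) := by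
          rw [Finset.sum_const, Finset.card_univ, Fintype.card_fun]
          simp [Fintype.card_fin]
  exact hle.trans htgtcard
lemma aux_exists_avoiding {α : Type*} [Fintype α] [DecidableEq α]
    (Bad : Finset (Finset α)) (N rr : ℕ)
    (hb : ∀ T ∈ Bad, T.card = rr) (hrN : rr ≤ N) (hNn : N ≤ Fintype.card α)
    (hlt : Bad.card * ((Fintype.card α - rr).choose (N - rr)) < (Fintype.card α).choose N) :
    ∃ R : Finset α, R.card = N ∧ ∀ T ∈ Bad, ¬ T ⊆ R := by
  classical
  set P : Finset (Finset α) := Finset.powersetCard N (Finset.univ : Finset α) with hPdef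
  have hPcard : P.card = (Fintype.card α).choose N := by
    rw [hPdef, Finset.card_powersetCard, Finset.card_univ]
  set covered : Finset (Finset α) := P.filter (fun R => ∃ T ∈ Bad, T ⊆ R) with hcov
  have hsub : covered ⊆ Bad.biUnion (fun T => P.filter (fun R => T ⊆ R)) := by
    intro R hR
    rw [hcov, Finset.mem_filter] at hR
    obtain ⟨hRP, T, hT, hTR⟩ := hR
    exact Finset.mem_biUnion.mpr ⟨T, hT, Finset.mem_filter.mpr ⟨hRP, hTR⟩⟩
  have hfiber : ∀ T ∈ Bad, (P.filter (fun R => T ⊆ R)).card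
      = (Fintype.card α - rr).choose (N - rr) := by
    intro T hT
    have hTcard := hb T hT
    have hcardsd : (Finset.univ \ T).card = Fintype.card α - rr := by
      rw [Finset.card_sdiff_of_subset (Finset.subset_univ T), Finset.card_univ, hTcard]
    rw [← hcardsd, ← Finset.card_powersetCard (N - rr) ((Finset.univ : Finset α) \ T)]
    apply Finset.card_bij (fun R _ => R \ T)
    · intro R hR
      rw [Finset.mem_filter, hPdef, Finset.mem_powersetCard] at hR
      obtain ⟨⟨_, hRcard⟩, hTR⟩ := hR
      rw [Finset.mem_powersetCard]
      constructor
      · exact Finset.sdiff_subset_sdiff (Finset.subset_univ R) (le_refl T)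
      · rw [Finset.card_sdiff_of_subset hTR, hRcard, hTcard]
    · intro R hR R' hR' hEq
      rw [Finset.mem_filter] at hR hR'
      have : R \ T ∪ T = R' \ T ∪ T := by rw [hEq]
      rwa [Finset.sdiff_union_of_subset hR.2, Finset.sdiff_union_of_subset hR'.2] at this
    · intro S hS
      rw [Finset.mem_powersetCard] at hS
      obtain ⟨hSsub, hScard⟩ := hS
      have hdisj : Disjoint S T := by
        intro u huS huT x hx
        have h1 := huS hx
        have h2 := huT hx
        have := hSsub h1
        rw [Finset.mem_sdiff] at this
        exact absurd h2 this.2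
      refine ⟨S ∪ T, ?_, ?_⟩
      · rw [Finset.mem_filter, hPdef, Finset.mem_powersetCard]
        refine ⟨⟨Finset.subset_univ _, ?_⟩, Finset.subset_union_right⟩
        rw [Finset.card_union_of_disjoint hdisj, hScard, hTcard]
        omega
      · exact Finset.union_sdiff_cancel_right hdisj
  have hcovlt : covered.card < P.card := by
    calc covered.card ≤ (Bad.biUnion (fun T => P.filter (fun R => T ⊆ R))).card :=
          Finset.card_le_card hsub
      _ ≤ ∑ T ∈ Bad, (P.filter (fun R => T ⊆ R)).card := Finset.card_biUnion_le
      _ = Bad.card * ((Fintype.card α - rr).choose (N - rr)) := by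
          rw [Finset.sum_congr rfl hfiber, Finset.sum_const, smul_eq_mul]
      _ < (Fintype.card α).choose N := hlt
      _ = P.card := hPcard.symm
  have hne : (P \ covered).Nonempty := by
    rw [← Finset.card_pos, Finset.card_sdiff_of_subset (Finset.filter_subset _ _), ← hcov]
    omega
  obtain ⟨R, hR⟩ := hne
  rw [Finset.mem_sdiff] at hR
  obtain ⟨hRP, hRnc⟩ := hR
  have hRcard : R.card = N := by
    rw [hPdef, Finset.mem_powersetCard] at hRP
    exact hRP.2
  refine ⟨R, hRcard, ?_⟩
  intro T hT hTR
  exact hRnc (Finset.mem_filter.mpr ⟨hRP, T, hT, hTR⟩)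

theorem statement16 (d k : ℕ) (hk2 : 2 ≤ k) (hkd : k + 2 ≤ d)
    (ε : ℝ) (hε : ε ∈ Set.Ioo (0:ℝ) 1) :
    ∃ p₀ : ℕ, 0 < p₀ ∧
      ∀ p : ℕ, p.Prime → p₀ ≤ p →
        ∃ R : Finset (Fin (d-1) → ZMod p),
          (p:ℝ) ^ ((d:ℝ) - (k:ℝ) - ε) / 2 ≤ (R.card : ℝ) ∧
          ∀ A : AffineSubspace (ZMod p) (Fin (d-1) → ZMod p),
            (A : Set (Fin (d-1) → ZMod p)).Nonempty →
            Module.finrank (ZMod p) A.direction = k - 1 →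
            ((R : Set (Fin (d-1) → ZMod p)) ∩ (A : Set (Fin (d-1) → ZMod p))).ncard ≤
              ⌈((k:ℝ) * ((d:ℝ) - (k:ℝ) + 1)) / ε⌉₊ - 1 := by
  classical
  obtain ⟨hε0, hε1⟩ := hε
  set r : ℕ := ⌈((k:ℝ) * ((d:ℝ) - (k:ℝ) + 1)) / ε⌉₊ with hrdef
  have hkdR : (k:ℝ) + 2 ≤ (d:ℝ) := by exact_mod_cast hkd
  have hk2R : (2:ℝ) ≤ (k:ℝ) := by exact_mod_cast hk2
  have hr_real : (k:ℝ) * ((d:ℝ) - k + 1) ≤ ε * r := by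
    have h1 : ((k:ℝ) * ((d:ℝ) - (k:ℝ) + 1)) / ε ≤ (r:ℝ) := Nat.le_ceil _
    have h2 : (k:ℝ) * ((d:ℝ) - k + 1) = ε * (((k:ℝ) * ((d:ℝ) - (k:ℝ) + 1)) / ε) := by
      field_simp
    rw [h2]
    exact mul_le_mul_of_nonneg_left h1 hε0.le
  have hrk : k + 1 ≤ r := by
    have hq1 : (3:ℝ)*(k:ℝ) ≤ (k:ℝ)*((d:ℝ)-k+1) := by
      nlinarith [mul_nonneg (by linarith : (0:ℝ) ≤ (k:ℝ)) (by linarith : (0:ℝ) ≤ (d:ℝ)-k-2)]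
    have hq2 : ε * (r:ℝ) ≤ (r:ℝ) := by
      nlinarith [mul_nonneg (by linarith : (0:ℝ) ≤ 1-ε) (Nat.cast_nonneg (α := ℝ) r)]
    have h3 : ((k:ℕ):ℝ) + 1 ≤ (r:ℝ) := by linarith
    exact_mod_cast h3
  have hr1 : 1 ≤ r := by omega
  refine ⟨4^r + 2*r + 2, by positivity, ?_⟩
  intro p hp hpge
  haveI : Fact p.Prime := ⟨hp⟩
  have hp2 : 2 ≤ p := hp.two_le
  have hx1 : (1:ℝ) < (p:ℝ) := by exact_mod_cast lt_of_lt_of_le one_lt_two hp2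
  have hx0 : (0:ℝ) < (p:ℝ) := by positivity
  set x : ℝ := (p:ℝ) with hxdef
  set c : ℝ := (d:ℝ) - k - ε with hcdef
  have hc1 : 1 ≤ c := by rw [hcdef]; linarith
  set N : ℕ := ⌈x ^ c⌉₊ with hNdef
  have hxc_pos : 0 < x ^ c := Real.rpow_pos_of_pos hx0 c
  have hxc1 : (1:ℝ) ≤ x ^ c := by
    have := Real.rpow_le_rpow_of_exponent_le hx1.le (le_trans zero_le_one hc1)
    rwa [Real.rpow_zero] at this
  have hN_lb : x ^ c ≤ (N:ℝ) := Nat.le_ceil _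
  have hN_ub : (N:ℝ) ≤ 2 * x ^ c := by
    have := Nat.ceil_lt_add_one hxc_pos.le
    rw [← hNdef] at this
    linarith
  have hpN : p ≤ N := by
    have hxp : x ≤ x ^ c := by
      calc x = x ^ (1:ℝ) := (Real.rpow_one x).symm
        _ ≤ x ^ c := Real.rpow_le_rpow_of_exponent_le hx1.le hc1
    have : (p:ℝ) ≤ (N:ℝ) := le_trans hxp hN_lb
    exact_mod_cast this
  have h2r2 : 2 * r + 2 ≤ p := by
    have h4 : 0 ≤ 4^r := Nat.zero_le _
    omega
  have hrp : r ≤ p := by omega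
  have hrN : r ≤ N := le_trans hrp hpN
  set n : ℕ := p ^ (d - 1) with hndef
  have hpn : p ≤ n := by
    calc p = p ^ 1 := (pow_one p).symm
      _ ≤ p ^ (d-1) := Nat.pow_le_pow_right (by omega) (by omega)
  have hkd1 : k ≤ d := by omega
  have hNpdk : N ≤ p ^ (d - k) := by
    apply Nat.ceil_le.mpr
    have h1 : x ^ c ≤ x ^ ((d:ℝ) - k) :=
      Real.rpow_le_rpow_of_exponent_le hx1.le (by rw [hcdef]; linarith)
    have h2 : x ^ ((d:ℝ) - k) = ((p ^ (d-k) : ℕ):ℝ) := by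
      rw [← Nat.cast_sub hkd1]
      rw [Real.rpow_natCast]
      push_cast
      ring
    rw [← h2]
    exact h1
  have hNn : N ≤ n := le_trans hNpdk (Nat.pow_le_pow_right (by omega) (by omega))
  have h2rn : 2 * r ≤ n := by omega

  -- the collection of bad subsets
  set V := (Fin (d-1) → ZMod p)
  have hcardV : Fintype.card V = n := by
    rw [hndef]
    rw [Fintype.card_fun, ZMod.card, Fintype.card_fin]
  set Bad : Finset (Finset V) := Finset.univ.filter (fun T => T.card = r ∧
    Module.finrank (ZMod p) (affineSpan (ZMod p) (T : Set V)).direction ≤ k - 1) with hBaddef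
  have hBadmem : ∀ T ∈ Bad, T.card = r ∧
      Module.finrank (ZMod p) (affineSpan (ZMod p) (T : Set V)).direction ≤ k - 1 := by
    intro T hT
    rw [hBaddef, Finset.mem_filter] at hT
    exact hT.2
  have hBadcard : Bad.card ≤ n ^ k * (p ^ (k-1)) ^ (r-k) := by
    have := aux_bad_count (K := ZMod p) (V := V) k r (by omega) (by omega) Bad hBadmem
    rwa [hcardV, ZMod.card] at this
  -- main numeric inequality
  have hstepC : n ^ k * (p ^ (k-1)) ^ (r-k) * N ^ r < (n + 1 - r) ^ r := by
    have hcast : ((n + 1 - r : ℕ):ℝ) = (n:ℝ) + 1 - r := by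
      have : r ≤ n + 1 := by omega
      push_cast [Nat.cast_sub this]
      ring
    rw [← Nat.cast_lt (α := ℝ)]
    push_cast [hcast]
    -- real quantities
    have hnx : (n:ℝ) = x ^ (d-1) := by rw [hndef]; push_cast; ring
    have hA : (n:ℝ)^k * ((x:ℝ)^(k-1))^(r-k) * (N:ℝ)^r
        = x ^ ((d-1)*k + (k-1)*(r-k)) * (N:ℝ)^r := by
      rw [hnx, ← pow_mul, ← pow_mul, ← pow_add]
    rw [hA]
    set A : ℕ := (d-1)*k + (k-1)*(r-k) with hAdef
    have hNr : (N:ℝ)^r ≤ 2^r * (x ^ (c * r)) := by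
      calc (N:ℝ)^r ≤ (2 * x ^ c)^r := by
            apply pow_le_pow_left₀ (by positivity) hN_ub
        _ = 2^r * (x ^ c)^r := by rw [mul_pow]
        _ = 2^r * (x ^ (c * r)) := by
            rw [← Real.rpow_natCast (x ^ c) r, ← Real.rpow_mul hx0.le]
    have hRHS : x ^ ((d-1)*r) / 2^r ≤ ((n:ℝ) + 1 - (r:ℝ))^r := by
      have h2 : (0:ℝ) ≤ (n:ℝ)/2 := by positivity
      have h2' : (n:ℝ)/2 ≤ (n:ℝ) + 1 - r := by
        have : (2*r : ℝ) ≤ (n:ℝ) := by exact_mod_cast h2rn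
        linarith
      have heq : x ^ ((d-1)*r) / 2^r = ((n:ℝ)/2)^r := by
        rw [hnx, div_pow, ← pow_mul]
      rw [heq]
      exact pow_le_pow_left₀ h2 h2' r
    -- now the exponent comparison
    have hkey : x ^ A * (2^r * x ^ (c * (r:ℝ))) < x ^ (((d-1)*r : ℕ)) / 2^r := by
      rw [div_eq_mul_inv, lt_mul_inv_iff₀ (by positivity : (0:ℝ) < 2^r)]
      have h24 : (4:ℝ)^r = 2^r * 2^r := by rw [← mul_pow]; norm_num
      have hrw : x ^ A * (2^r * x ^ (c*(r:ℝ))) * 2^r = 4^r * (x ^ ((A:ℝ) + c*(r:ℝ))) := by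
        rw [Real.rpow_add hx0, Real.rpow_natCast, h24]
        ring
      rw [hrw]
      have hxC := (Real.rpow_natCast x ((d-1)*r)).symm
      rw [hxC]
      set B : ℝ := (A:ℝ) + c * r with hBdef
      set C : ℝ := (((d - 1) * r : ℕ) : ℝ) with hCdef
      have hCB : C - B = ε * r - (k:ℝ)*((d:ℝ) - k) := by
        rw [hCdef, hBdef, hAdef, hcdef]
        have h1 : (1:ℕ) ≤ d := by omega
        have h2 : (1:ℕ) ≤ k := by omega
        have h3 : k ≤ r := by omega
        push_cast [Nat.cast_sub h1, Nat.cast_sub h2, Nat.cast_sub h3]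
        ring
      have hCBk : (1:ℝ) ≤ C - B := by
        rw [hCB]
        have hexp : (k:ℝ)*((d:ℝ)-(k:ℝ)) + (k:ℝ) = (k:ℝ)*((d:ℝ)-(k:ℝ)+1) := by ring
        linarith
      have h4x : (4:ℝ)^r < x := by
        have hx_ge : ((4^r + 2*r + 2 : ℕ):ℝ) ≤ x := by
          rw [hxdef]; exact_mod_cast hpge
        have h5 : (4:ℝ)^r < ((4^r + 2*r + 2 : ℕ):ℝ) := by
          push_cast
          have hr0 : (0:ℝ) ≤ (r:ℝ) := Nat.cast_nonneg r
          linarith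
        linarith
      calc (4:ℝ)^r * x ^ B < x * x ^ B := by
            apply mul_lt_mul_of_pos_right h4x (Real.rpow_pos_of_pos hx0 B)
        _ ≤ x ^ (C - B) * x ^ B := by
            apply mul_le_mul_of_nonneg_right ?_ (Real.rpow_pos_of_pos hx0 B).le
            calc x = x ^ (1:ℝ) := (Real.rpow_one x).symm
              _ ≤ x ^ (C - B) := Real.rpow_le_rpow_of_exponent_le hx1.le hCBk
        _ = x ^ C := by rw [← Real.rpow_add hx0]; ring_nf
    calc x ^ A * (N:ℝ)^r ≤ x ^ A * (2^r * x ^ (c * r)) := by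
          apply mul_le_mul_of_nonneg_left hNr (by positivity)
      _ < x ^ (((d-1)*r : ℕ)) / 2^r := hkey
      _ ≤ ((n:ℝ) + 1 - (r:ℝ))^r := hRHS
  have hstepB : Bad.card * N.choose r < n.choose r := by
    apply Nat.lt_of_mul_lt_mul_left (a := r.factorial)
    calc r.factorial * (Bad.card * N.choose r)
        = Bad.card * (r.factorial * N.choose r) := by ring
      _ = Bad.card * N.descFactorial r := by rw [← Nat.descFactorial_eq_factorial_mul_choose]
      _ ≤ Bad.card * N ^ r := Nat.mul_le_mul_left _ (Nat.descFactorial_le_pow N r)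
      _ ≤ n ^ k * (p ^ (k-1)) ^ (r-k) * N ^ r := Nat.mul_le_mul_right _ hBadcard
      _ < (n + 1 - r) ^ r := hstepC
      _ ≤ n.descFactorial r := Nat.pow_sub_le_descFactorial n r
      _ = r.factorial * n.choose r := Nat.descFactorial_eq_factorial_mul_choose n r
  have hmain : Bad.card * ((n - r).choose (N - r)) < n.choose N := by
    have hid : n.choose N * N.choose r = n.choose r * ((n - r).choose (N - r)) :=
      Nat.choose_mul (n := n) hrN
    have hpos1 : 0 < N.choose r := Nat.choose_pos hrN
    have hpos2 : 0 < (n - r).choose (N - r) := Nat.choose_pos (by omega)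
    apply Nat.lt_of_mul_lt_mul_right (a := N.choose r)
    calc Bad.card * ((n - r).choose (N - r)) * N.choose r
        = Bad.card * N.choose r * ((n - r).choose (N - r)) := by ring
      _ < n.choose r * ((n - r).choose (N - r)) := by
          exact (Nat.mul_lt_mul_right hpos2).mpr hstepB
      _ = n.choose N * N.choose r := hid.symm
  obtain ⟨R, hRcard, hRgood⟩ := aux_exists_avoiding Bad N r
    (fun T hT => (hBadmem T hT).1) hrN (by rw [hcardV]; exact hNn)
    (by rw [hcardV]; exact hmain)
  refine ⟨R, ?_, ?_⟩
  · rw [hRcard]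
    calc x ^ ((d:ℝ) - (k:ℝ) - ε) / 2 ≤ x ^ c := by
          rw [hcdef]
          linarith [hxc_pos]
      _ ≤ (N:ℝ) := hN_lb
  · intro A hAne hAdim
    set I : Finset V := R.filter (· ∈ A) with hIdef
    have hIeq : ((R : Set V) ∩ (A : Set V)) = (I : Set V) := by
      ext z
      simp [hIdef, Finset.mem_filter]
    rw [hIeq, Set.ncard_coe_finset]
    by_contra hcon
    push_neg at hcon
    have hIr : r ≤ I.card := by omega
    obtain ⟨T, hTsub, hTcard⟩ := Finset.exists_subset_card_eq hIr
    have hTR : T ⊆ R := hTsub.trans (Finset.filter_subset _ _)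
    have hTA : (T : Set V) ⊆ (A : Set V) := by
      intro z hz
      have := hTsub hz
      rw [hIdef, Finset.mem_filter] at this
      exact this.2
    have hTBad : T ∈ Bad := by
      rw [hBaddef, Finset.mem_filter]
      refine ⟨Finset.mem_univ _, hTcard, ?_⟩
      have hle : affineSpan (ZMod p) (T : Set V) ≤ A := (affineSpan_le).mpr hTA
      have hdir := AffineSubspace.direction_le hle
      have := Submodule.finrank_mono hdir
      rw [hAdim] at this
      exact this
    exact hRgood T hTBad hTR
end
end

section
/- Let d, k, r_1, r_2 be positive integers with 0 ≤ k ≤ d−2. Let P ⊆ ℝ^d be a finite set of points such that every k-dimensional affine subspace of ℝ^d contains at most r_1−1 points of P, let N ⊆ ℝ^d∖{0} be a finite set such that every (d−k−1)-dimensional linear subspace of ℝ^d contains at most r_2−1 points of N, and let H be a finite set of hyperplanes in ℝ^d each of which has its normal vector in N. Then there do not exist r_1 points of P and r_2 distinct hyperplanes of H such that each of these points lies on each of these hyperplanes; that is, K_{r_1,r_2} ⊄ G(P,H). -/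
open scoped BigOperators Pointwise
open Metric

noncomputable section

lemma ext_rank {d : ℕ} (W : Submodule ℝ (Euc d)) (n : ℕ)
    (h1 : Module.finrank ℝ W ≤ n) (h2 : n ≤ d) :
    ∃ W' : Submodule ℝ (Euc d), W ≤ W' ∧ Module.finrank ℝ W' = n := by
  induction n, h1 using Nat.le_induction with
  | base => exact ⟨W, le_rfl, rfl⟩
  | succ n hn ih =>
    obtain ⟨W', hWW', hW'⟩ := ih (le_of_lt (Nat.lt_of_succ_le h2))
    have hne : W' ≠ ⊤ := by
      intro h
      rw [h, finrank_top, finrank_euclideanSpace_fin] at hW'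
      omega
    obtain ⟨x, hx⟩ : ∃ x, x ∉ W' := by
      by_contra h
      push_neg at h
      exact hne (Submodule.eq_top_iff'.mpr h)
    have hx0 : x ≠ 0 := fun h => hx (h ▸ W'.zero_mem)
    refine ⟨W' ⊔ Submodule.span ℝ {x}, le_trans hWW' le_sup_left, ?_⟩
    have hdisj : W' ⊓ Submodule.span ℝ {x} = ⊥ :=
      ((Submodule.disjoint_span_singleton' hx0).mpr hx).eq_bot
    have := Submodule.finrank_sup_add_finrank_inf_eq W' (Submodule.span ℝ {x})
    rw [hdisj, finrank_bot, finrank_span_singleton hx0, hW'] at this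
    omega

theorem statement18 (d k r₁ r₂ : ℕ) (hr₁ : 0 < r₁) (hr₂ : 0 < r₂) (hkd : k + 2 ≤ d)
    (P : Finset (Euc d)) (N : Finset (Euc d)) (hN0 : ∀ z ∈ N, z ≠ 0)
    (hP : ∀ A : AffineSubspace ℝ (Euc d), (A : Set (Euc d)).Nonempty →
      Module.finrank ℝ A.direction = k →
      ((P : Set (Euc d)) ∩ (A : Set (Euc d))).ncard ≤ r₁ - 1)
    (hN : ∀ W : Submodule ℝ (Euc d), Module.finrank ℝ W = d - k - 1 →
      ((N : Set (Euc d)) ∩ (W : Set (Euc d))).ncard ≤ r₂ - 1)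
    (H : Finset (AffineSubspace ℝ (Euc d)))
    (hH : ∀ h ∈ H, ∃ z ∈ N, ∃ b : ℝ, (h : Set (Euc d)) = {x : Euc d | (inner ℝ x z : ℝ) = b}) :
    ¬ HasKrr P H r₁ r₂ := by
  classical
  rintro ⟨P', H', hP'P, hH'H, hcP, hcH, hall⟩
  have hHc : ∀ h : {h // h ∈ H'}, ∃ z ∈ N, ∃ b : ℝ,
      ((h : AffineSubspace ℝ (Euc d)) : Set (Euc d)) = {x : Euc d | (inner ℝ x z : ℝ) = b} :=
    fun h => hH h (hH'H h.2)
  choose z hzN b hb using hHc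
  obtain ⟨p0, hp0⟩ : ∃ p, p ∈ P' := Finset.card_pos.mp (hcP ▸ hr₁)
  have hmem : ∀ p ∈ P', ∀ h : {h // h ∈ H'}, (inner ℝ p (z h) : ℝ) = b h := by
    intro p hp h
    have := hall p hp h.1 h.2
    rw [← SetLike.mem_coe, hb h] at this
    exact this
  have hinj : Function.Injective z := by
    intro h1 h2 hz
    have hbeq : b h1 = b h2 := by
      rw [← hmem p0 hp0 h1, ← hmem p0 hp0 h2, hz]
    apply Subtype.ext
    apply SetLike.coe_injective
    rw [hb h1, hb h2, hz, hbeq]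
  set W : Submodule ℝ (Euc d) := Submodule.span ℝ (Set.range z) with hW
  by_cases hdim : Module.finrank ℝ W ≤ d - k - 1
  · obtain ⟨W', hWW', hW'⟩ := ext_rank W (d - k - 1) hdim (by omega)
    have hsub : ((H'.attach.image z : Finset (Euc d)) : Set (Euc d)) ⊆
        (N : Set (Euc d)) ∩ (W' : Set (Euc d)) := by
      intro x hx
      simp only [Finset.coe_image, Set.mem_image] at hx
      obtain ⟨h, -, rfl⟩ := hx
      exact ⟨hzN h, hWW' (Submodule.subset_span (Set.mem_range_self h))⟩
    have hcard : (H'.attach.image z).card = r₂ := by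
      rw [Finset.card_image_of_injective _ hinj, Finset.card_attach, hcH]
    have hle : r₂ ≤ ((N : Set (Euc d)) ∩ (W' : Set (Euc d))).ncard := by
      rw [← hcard, ← Set.ncard_coe_finset]
      exact Set.ncard_le_ncard hsub (N.finite_toSet.inter_of_left _)
    have := hN W' hW'
    omega
  · push_neg at hdim
    have hWtot : Module.finrank ℝ W + Module.finrank ℝ Wᗮ = d := by
      rw [W.finrank_add_finrank_orthogonal, finrank_euclideanSpace_fin]
    have hdimW : Module.finrank ℝ Wᗮ ≤ k := by omega
    obtain ⟨U, hWU, hU⟩ := ext_rank Wᗮ k hdimW (by omega)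
    set A := AffineSubspace.mk' p0 U with hA
    have hP'A : ∀ p ∈ P', p ∈ A := by
      intro p hp
      rw [hA, AffineSubspace.mem_mk']
      apply hWU
      rw [Submodule.mem_orthogonal]
      intro u hu
      induction hu using Submodule.span_induction with
      | mem x hx =>
        obtain ⟨h, rfl⟩ := hx
        have h1 := hmem p hp h
        have h2 := hmem p0 hp0 h
        have : (p : Euc d) -ᵥ p0 = p - p0 := rfl
        rw [this, real_inner_comm, inner_sub_left, h1, h2, sub_self]
      | zero => rw [inner_zero_left]
      | add x y _ _ hx hy => rw [inner_add_left, hx, hy, add_zero]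
      | smul a x _ hx => rw [inner_smul_left, hx, mul_zero]
    have hsub : ((P' : Finset (Euc d)) : Set (Euc d)) ⊆
        (P : Set (Euc d)) ∩ (A : Set (Euc d)) := by
      intro p hp
      exact ⟨hP'P hp, hP'A p hp⟩
    have hle : r₁ ≤ ((P : Set (Euc d)) ∩ (A : Set (Euc d))).ncard := by
      rw [← hcP, ← Set.ncard_coe_finset]
      exact Set.ncard_le_ncard hsub (P.finite_toSet.inter_of_left _)
    have := hP A ⟨p0, AffineSubspace.self_mem_mk' p0 U⟩
      (by rw [hA, AffineSubspace.direction_mk']; exact hU)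
    omega
end
end
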